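/- arXiv:2207.09852 — 6 statements merged into one kernel-verified Lean document; each statement's English description precedes it below -/
import Mathlib

section
/- Let 𝒳 be a real Banach space, Θ an index set, y : [0,1] → 𝒳 continuous, and {g_θ}_{θ∈Θ} a family of functions 𝒳 → ℝ equicontinuous at every point of the image {y_t : t ∈ [0,1]}. Let (Ω, ℱ, P) be a probability space and, along a filter l on an index type (a net), let Y^ι : Ω × [0,1] → 𝒳 be stochastic processes with bounded paths such that the maps ω ↦ sup_{t∈[0,1]} ‖Y^ι_t(ω) − y_t‖ and ω ↦ sup_{θ∈Θ} sup_{t∈[0,1]} |g_θ(Y^ι_t(ω)) − g_θ(y_t)| are measurable. If for every δ > 0, P( sup_{t∈[0,1]} ‖Y^ι_t − y_t‖ > δ ) → 0 along l, then for every η > 0, P( sup_{θ∈Θ} sup_{t∈[0,1]} |g_θ(Y^ι_t) − g_θ(y_t)| > η ) → 0 along l. -/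
open Set MeasureTheory

/-- Lemma A.2: localized continuous mapping theorem for convergence in probability
along a net (filter) of stochastic processes. -/
theorem stmt_1 {X Θ ι Ω : Type*} [NormedAddCommGroup X] [NormedSpace ℝ X]
    [MeasurableSpace Ω] (P : Measure Ω) [IsProbabilityMeasure P]
    (l : Filter ι) (y : ℝ → X) (g : Θ → X → ℝ)
    (hy : ContinuousOn y (Set.Icc 0 1))
    (heq : ∀ x ∈ y '' Set.Icc (0:ℝ) 1, ∀ ε > 0, ∃ δ > 0,
      ∀ x' : X, ‖x' - x‖ < δ → ∀ θ : Θ, |g θ x' - g θ x| < ε)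
    (Y : ι → Ω → ℝ → X)
    (hbdd : ∀ i ω, Bornology.IsBounded (Y i ω '' Set.Icc (0:ℝ) 1))
    (hmeas1 : ∀ i, Measurable fun ω => ⨆ t : Set.Icc (0:ℝ) 1, ‖Y i ω t - y t‖)
    (hmeas2 : ∀ i, Measurable fun ω =>
      ⨆ θ : Θ, ⨆ t : Set.Icc (0:ℝ) 1, |g θ (Y i ω t) - g θ (y t)|)
    (hconv : ∀ δ > 0, Filter.Tendsto
      (fun i => P {ω | δ < ⨆ t : Set.Icc (0:ℝ) 1, ‖Y i ω t - y t‖}) l (nhds 0)) :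
    ∀ η > 0, Filter.Tendsto
      (fun i => P {ω | η < ⨆ θ : Θ, ⨆ t : Set.Icc (0:ℝ) 1, |g θ (Y i ω t) - g θ (y t)|})
      l (nhds 0) := by
  classical
  intro η hη
  set K := y '' Set.Icc (0:ℝ) 1 with hKdef
  have hK : IsCompact K := isCompact_Icc.image_of_continuousOn hy
  have hchoice : ∀ x : X, ∃ e > (0:ℝ), x ∈ K →
      ∀ x' : X, ‖x' - x‖ < e → ∀ θ : Θ, |g θ x' - g θ x| < η / 2 := by
    intro x
    by_cases hx : x ∈ K
    · obtain ⟨e, he, h⟩ := heq x hx (η / 2) (by linarith)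
      exact ⟨e, he, fun _ => h⟩
    · exact ⟨1, one_pos, fun h => absurd h hx⟩
  choose d hd hdprop using hchoice
  obtain ⟨s, hsK, hcover⟩ := hK.elim_nhds_subcover (fun x => Metric.ball x (d x / 2))
    (fun x _ => Metric.ball_mem_nhds x (by linarith [hd x]))
  have hKne : y 0 ∈ K := ⟨0, by norm_num, rfl⟩
  have hsne : s.Nonempty := by
    rcases mem_iUnion₂.1 (hcover hKne) with ⟨x, hx, _⟩
    exact ⟨x, hx⟩
  set δ : ℝ := s.inf' hsne (fun x => d x / 2) with hδdef
  have hδpos : 0 < δ := by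
    rw [hδdef, Finset.lt_inf'_iff]
    intro b _; linarith [hd b]
  haveI : Nonempty (Set.Icc (0:ℝ) 1) := ⟨⟨0, by norm_num⟩⟩
  have hsub : ∀ i, {ω | η < ⨆ θ : Θ, ⨆ t : Set.Icc (0:ℝ) 1, |g θ (Y i ω t) - g θ (y t)|}
      ⊆ {ω | δ < ⨆ t : Set.Icc (0:ℝ) 1, ‖Y i ω t - y t‖} := by
    intro i ω hω
    by_contra hcon
    simp only [Set.mem_setOf_eq, not_lt] at hcon
    obtain ⟨C1, hC1⟩ := (hbdd i ω).exists_norm_le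
    obtain ⟨C2, hC2⟩ := hK.isBounded.exists_norm_le
    have hbda : BddAbove (Set.range fun t : Set.Icc (0:ℝ) 1 => ‖Y i ω t - y t‖) := by
      refine ⟨C1 + C2, ?_⟩
      rintro r ⟨t, rfl⟩
      calc ‖Y i ω t - y t‖ ≤ ‖Y i ω t‖ + ‖y t‖ := norm_sub_le _ _
        _ ≤ C1 + C2 := add_le_add (hC1 _ ⟨t, t.2, rfl⟩) (hC2 _ ⟨t, t.2, rfl⟩)
    have key : ∀ θ : Θ, ∀ t : Set.Icc (0:ℝ) 1, |g θ (Y i ω t) - g θ (y t)| < η := by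
      intro θ t
      have hyt : y t ∈ K := ⟨t, t.2, rfl⟩
      rcases mem_iUnion₂.1 (hcover hyt) with ⟨x, hxs, hball⟩
      have hx1 : ‖y t - x‖ < d x / 2 := by
        simpa [Metric.mem_ball, dist_eq_norm] using hball
      have hxK : x ∈ K := hsK x hxs
      have h1 : |g θ (y t) - g θ x| < η / 2 :=
        hdprop x hxK _ (lt_of_lt_of_le hx1 (by linarith [hd x])) θ
      have hYt : ‖Y i ω t - y t‖ ≤ δ := le_trans (le_ciSup hbda t) hcon
      have hδx : δ ≤ d x / 2 := Finset.inf'_le _ hxs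
      have h2 : ‖Y i ω t - x‖ < d x := by
        calc ‖Y i ω t - x‖ ≤ ‖Y i ω t - y t‖ + ‖y t - x‖ := norm_sub_le_norm_sub_add_norm_sub _ _ _
          _ < δ + d x / 2 := by linarith
          _ ≤ d x := by linarith
      have h3 : |g θ (Y i ω t) - g θ x| < η / 2 := hdprop x hxK _ h2 θ
      have := abs_sub_le (g θ (Y i ω t)) (g θ x) (g θ (y t))
      have h1' : |g θ x - g θ (y t)| < η / 2 := by rwa [abs_sub_comm]
      linarith
    have : (⨆ θ : Θ, ⨆ t : Set.Icc (0:ℝ) 1, |g θ (Y i ω t) - g θ (y t)|) ≤ η := by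
      refine Real.iSup_le (fun θ => Real.iSup_le (fun t => (key θ t).le) hη.le) hη.le
    exact absurd hω (by simp only [Set.mem_setOf_eq, not_lt]; exact this)
  exact tendsto_of_tendsto_of_tendsto_of_le_of_le tendsto_const_nhds (hconv δ hδpos)
    (fun i => zero_le) (fun i => measure_mono (hsub i))
end

section
/- Let (Ω, ℱ, P) be a probability space, 𝒳 a real Banach space, n ∈ ℕ, and ℱ_0 ⊆ ℱ_1 ⊆ … ⊆ ℱ_n ⊆ ℱ a filtration. Let χ_1, …, χ_n be Bochner-integrable 𝒳-valued random variables with χ_i measurable with respect to ℱ_i for each i. Then for all η > 0 and η' > 0, P( ‖ ∑_{i=1}^n χ_i ‖ > η ) ≤ η'/η + P( ∑_{i=1}^n E[ ‖χ_i‖ | ℱ_{i−1} ] > η' ). -/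
open MeasureTheory

/-- Key inequality in the proof of Lemma A.3 (a Lenglart-type inequality for
Banach-space-valued random variables). -/
theorem stmt_3 {Ω X : Type*} [NormedAddCommGroup X] [NormedSpace ℝ X]
    {m0 : MeasurableSpace Ω} (P : Measure Ω) [IsProbabilityMeasure P]
    (n : ℕ) (G : ℕ → MeasurableSpace Ω)
    (hGmono : Monotone G) (hGle : ∀ i, G i ≤ m0)
    (χ : ℕ → Ω → X)
    (hint : ∀ i ∈ Finset.Icc 1 n, Integrable (χ i) P)
    (hmeas : ∀ i ∈ Finset.Icc 1 n, StronglyMeasurable[G i] (χ i)) :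
    ∀ η : ℝ, 0 < η → ∀ η' : ℝ, 0 < η' →
      P {ω | η < ‖∑ i ∈ Finset.Icc 1 n, χ i ω‖} ≤
        ENNReal.ofReal (η' / η) +
        P {ω | η' < ∑ i ∈ Finset.Icc 1 n, (P[fun ω' => ‖χ i ω'‖|G (i - 1)]) ω} := by
  intro η hη η' hη'
  set f : ℕ → Ω → ℝ := fun i => P[fun ω' => ‖χ i ω'‖|G (i - 1)] with hfdef
  -- each conditional expectation is a.e. nonnegative
  have hf_nonneg : ∀ i, 0 ≤ᵐ[P] f i := fun i =>
    condExp_nonneg (Filter.Eventually.of_forall fun ω => norm_nonneg _)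
  have hf_nonneg_all : ∀ᵐ ω ∂P, ∀ i, 0 ≤ f i ω := ae_all_iff.2 hf_nonneg
  -- partial sums
  set S : ℕ → Ω → ℝ := fun k ω => ∑ i ∈ Finset.Icc 1 k, f i ω with hSdef
  set A : ℕ → Set Ω := fun i => {ω | S i ω ≤ η'} with hAdef
  have hf_meas : ∀ i, StronglyMeasurable[G (i - 1)] (f i) := fun i =>
    stronglyMeasurable_condExp
  have hS_meas : ∀ i, StronglyMeasurable[G (i - 1)] (S i) := by
    intro i
    apply Finset.stronglyMeasurable_fun_sum
    intro j hj
    have hji := (Finset.mem_Icc.1 hj).2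
    exact (hf_meas j).mono (hGmono (by omega : j - 1 ≤ i - 1))
  have hA_measG : ∀ i, MeasurableSet[G (i - 1)] (A i) := fun i =>
    (hS_meas i).measurable measurableSet_Iic
  have hA_meas : ∀ i, MeasurableSet[m0] (A i) := fun i => hGle _ _ (hA_measG i)
  -- the truncated sum
  set Y : Ω → X := fun ω => ∑ i ∈ Finset.Icc 1 n, (A i).indicator (χ i) ω with hYdef
  have hY_int : Integrable Y P :=
    integrable_finset_sum _ fun i hi => (hint i hi).indicator (hA_meas i)
  -- monotonicity of partial sums under nonnegativity
  have hS_mono : ∀ ω, (∀ j, 0 ≤ f j ω) → ∀ i, i ≤ n → S i ω ≤ S n ω := by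
    intro ω hω i hi
    exact Finset.sum_le_sum_of_subset_of_nonneg
      (Finset.Icc_subset_Icc_right hi) (fun j _ _ => hω j)
  -- Step 1 : split the event
  have hsplit : P {ω | η < ‖∑ i ∈ Finset.Icc 1 n, χ i ω‖} ≤
      P {ω | η < ‖Y ω‖} + P {ω | η' < S n ω} := by
    refine le_trans (measure_mono_ae ?_) (measure_union_le _ _)
    filter_upwards [hf_nonneg_all] with ω hω hmem
    by_cases hSn : η' < S n ω
    · exact Or.inr hSn
    · left
      have hYeq : Y ω = ∑ i ∈ Finset.Icc 1 n, χ i ω := by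
        refine Finset.sum_congr rfl fun i hi => ?_
        have : ω ∈ A i := by
          have := hS_mono ω hω i (Finset.mem_Icc.1 hi).2
          exact le_trans this (not_lt.1 hSn)
        simp [Set.indicator_of_mem this]
      simpa [Set.mem_setOf_eq, hYeq] using (show η < ‖∑ i ∈ Finset.Icc 1 n, χ i ω‖ from hmem)
  -- pointwise bound on the truncated conditional sums
  have hpt : ∀ ω, (∀ j, 0 ≤ f j ω) →
      ∑ i ∈ Finset.Icc 1 n, (A i).indicator (f i) ω ≤ η' := by
    intro ω hω
    suffices h : ∀ m : ℕ, ∑ i ∈ Finset.Icc 1 m, (A i).indicator (f i) ω ≤ η' from h n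
    intro m
    induction m with
    | zero => simpa using hη'.le
    | succ m ih =>
      rw [Finset.sum_Icc_succ_top (by omega : 1 ≤ m + 1)]
      by_cases hS : ω ∈ A (m + 1)
      · have : ∀ i ∈ Finset.Icc 1 (m + 1), (A i).indicator (f i) ω = f i ω := by
          intro i hi
          have hmem : ω ∈ A i := by
            have hle : S i ω ≤ S (m + 1) ω :=
              Finset.sum_le_sum_of_subset_of_nonneg
                (Finset.Icc_subset_Icc_right (Finset.mem_Icc.1 hi).2) (fun j _ _ => hω j)
            exact le_trans hle hS
          simp [Set.indicator_of_mem hmem]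
        rw [← Finset.sum_Icc_succ_top (by omega : 1 ≤ m + 1)]
        calc ∑ i ∈ Finset.Icc 1 (m + 1), (A i).indicator (f i) ω
            = ∑ i ∈ Finset.Icc 1 (m + 1), f i ω := Finset.sum_congr rfl this
          _ ≤ η' := hS
      · rw [Set.indicator_of_notMem hS, add_zero]
        exact ih
  -- integral bound : ∫ ‖Y‖ ≤ η'
  have hf_int : ∀ i ∈ Finset.Icc 1 n, Integrable (f i) P := fun i _ => integrable_condExp
  have hnormint : ∀ i ∈ Finset.Icc 1 n,
      Integrable ((A i).indicator fun ω => ‖χ i ω‖) P := fun i hi =>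
    (hint i hi).norm.indicator (hA_meas i)
  have hYnorm_le : ∫ ω, ‖Y ω‖ ∂P ≤ η' := by
    have step1 : ∫ ω, ‖Y ω‖ ∂P ≤
        ∫ ω, ∑ i ∈ Finset.Icc 1 n, (A i).indicator (fun ω' => ‖χ i ω'‖) ω ∂P := by
      refine integral_mono hY_int.norm (integrable_finset_sum _ hnormint) fun ω => ?_
      calc ‖Y ω‖ ≤ ∑ i ∈ Finset.Icc 1 n, ‖(A i).indicator (χ i) ω‖ :=
            norm_sum_le _ _
        _ = ∑ i ∈ Finset.Icc 1 n, (A i).indicator (fun ω' => ‖χ i ω'‖) ω := by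
            refine Finset.sum_congr rfl fun i _ => ?_
            exact norm_indicator_eq_indicator_norm _ _
    have step2 : ∫ ω, ∑ i ∈ Finset.Icc 1 n, (A i).indicator (fun ω' => ‖χ i ω'‖) ω ∂P
        = ∫ ω, ∑ i ∈ Finset.Icc 1 n, (A i).indicator (f i) ω ∂P := by
      rw [integral_finset_sum _ hnormint,
        integral_finset_sum _ (fun i hi => (hf_int i hi).indicator (hA_meas i))]
      refine Finset.sum_congr rfl fun i hi => ?_
      rw [integral_indicator (hA_meas i), integral_indicator (hA_meas i)]
      exact (setIntegral_condExp (hGle (i - 1)) (hint i hi).norm (hA_measG i)).symm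
    have step3 : ∫ ω, ∑ i ∈ Finset.Icc 1 n, (A i).indicator (f i) ω ∂P ≤ η' := by
      have : ∫ ω, ∑ i ∈ Finset.Icc 1 n, (A i).indicator (f i) ω ∂P
          ≤ ∫ _ω, η' ∂P := by
        refine integral_mono_ae
          (integrable_finset_sum _ fun i hi => (hf_int i hi).indicator (hA_meas i))
          (integrable_const _) ?_
        filter_upwards [hf_nonneg_all] with ω hω
        exact hpt ω hω
      simpa using this
    exact le_trans step1 (step2 ▸ step3)
  -- Step 2 : Markov
  have hmarkov : P {ω | η < ‖Y ω‖} ≤ ENNReal.ofReal (η' / η) := by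
    have hm := mul_meas_ge_le_integral_of_nonneg
      (Filter.Eventually.of_forall fun ω => norm_nonneg (Y ω)) hY_int.norm η
    have htoReal : (P {ω | η ≤ ‖Y ω‖}).toReal ≤ η' / η := by
      rw [le_div_iff₀ hη, mul_comm]
      exact le_trans hm hYnorm_le
    calc P {ω | η < ‖Y ω‖} ≤ P {ω | η ≤ ‖Y ω‖} :=
          measure_mono fun ω (h : η < ‖Y ω‖) => (le_of_lt h : η ≤ ‖Y ω‖)
      _ = ENNReal.ofReal ((P {ω | η ≤ ‖Y ω‖}).toReal) :=
          (ENNReal.ofReal_toReal (measure_ne_top _ _)).symm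
      _ ≤ ENNReal.ofReal (η' / η) := ENNReal.ofReal_le_ofReal htoReal
  calc P {ω | η < ‖∑ i ∈ Finset.Icc 1 n, χ i ω‖}
      ≤ P {ω | η < ‖Y ω‖} + P {ω | η' < S n ω} := hsplit
    _ ≤ ENNReal.ofReal (η' / η) + P {ω | η' < S n ω} := by
        exact add_le_add hmarkov le_rfl
end

section
/- Let (Ω, ℱ, P) be a probability space and 𝒳 a real Banach space. Along a filter l on an index type, suppose for each index ι one is given n(ι) ∈ ℕ, a filtration 𝒢^ι_0 ⊆ … ⊆ 𝒢^ι_{n(ι)} ⊆ ℱ, and Bochner-integrable 𝒳-valued random variables χ^ι_1, …, χ^ι_{n(ι)} with χ^ι_i measurable with respect to 𝒢^ι_i. If for every η > 0, P( ∑_{i=1}^{n(ι)} E[ ‖χ^ι_i‖ | 𝒢^ι_{i−1} ] > η ) → 0 along l, then for every η > 0, P( ‖ ∑_{i=1}^{n(ι)} χ^ι_i ‖ > η ) → 0 along l. -/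
open MeasureTheory

/-- Deterministic "stopping" lemma: for nonnegative reals `e k`, the sum of `e k` over those
`k` whose running sum is still below `ε` is at most `ε`. -/
lemma aux_stopped_sum (ε : ℝ) (hε : 0 ≤ ε) (n : ℕ) (e : ℕ → ℝ) (he : ∀ k, 0 ≤ e k) :
    ∑ k ∈ Finset.Icc 1 n, (if (∑ j ∈ Finset.Icc 1 k, e j) ≤ ε then e k else 0) ≤ ε := by
  induction n with
  | zero => simpa using hε
  | succ m ih =>
    by_cases h : (∑ j ∈ Finset.Icc 1 (m + 1), e j) ≤ ε
    · calc ∑ k ∈ Finset.Icc 1 (m + 1),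
            (if (∑ j ∈ Finset.Icc 1 k, e j) ≤ ε then e k else 0)
          = ∑ k ∈ Finset.Icc 1 (m + 1), e k := by
            refine Finset.sum_congr rfl (fun k hk => ?_)
            rw [if_pos]
            exact le_trans (Finset.sum_le_sum_of_subset_of_nonneg
              (Finset.Icc_subset_Icc_right (Finset.mem_Icc.mp hk).2)
              (fun j _ _ => he j)) h
      _ ≤ ε := h
    · rw [← Finset.insert_Icc_right_eq_Icc_add_one (Nat.succ_le_succ (Nat.zero_le m)),
        Finset.sum_insert (by simp), if_neg h, zero_add]
      exact ih

/-- Lemma A.3 (i): a Banach-space-valued version of Lemma 9 of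
Genon-Catalot and Jacod (1993), along a net of indices. -/
theorem stmt_4 {Ω X ι : Type*} [NormedAddCommGroup X] [NormedSpace ℝ X]
    {m0 : MeasurableSpace Ω} (P : Measure Ω) [IsProbabilityMeasure P]
    (l : Filter ι) (n : ι → ℕ) (G : ι → ℕ → MeasurableSpace Ω)
    (hGmono : ∀ i, Monotone (G i)) (hGle : ∀ i k, G i k ≤ m0)
    (χ : ι → ℕ → Ω → X)
    (hint : ∀ i, ∀ k ∈ Finset.Icc 1 (n i), Integrable (χ i k) P)
    (hmeas : ∀ i, ∀ k ∈ Finset.Icc 1 (n i), StronglyMeasurable[G i k] (χ i k))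
    (hcond : ∀ η : ℝ, 0 < η → Filter.Tendsto
      (fun i => P {ω | η <
        ∑ k ∈ Finset.Icc 1 (n i), (P[fun ω' => ‖χ i k ω'‖|G i (k - 1)]) ω}) l (nhds 0)) :
    ∀ η : ℝ, 0 < η → Filter.Tendsto
      (fun i => P {ω | η < ‖∑ k ∈ Finset.Icc 1 (n i), χ i k ω‖}) l (nhds 0) := by
  intro η hη
  rw [ENNReal.tendsto_nhds_zero]
  intro δ hδ
  set d : ENNReal := min δ 1 with hd_def
  have hd0 : 0 < d := lt_min hδ zero_lt_one
  have hdtop : d ≠ ⊤ := ne_top_of_le_ne_top ENNReal.one_ne_top (min_le_right _ _)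
  set r : ℝ := (d / 2).toReal with hr_def
  have hhalf_ne_top : d / 2 ≠ ⊤ := by
    simp [ENNReal.div_eq_top, hdtop]
  have hr0 : 0 < r := ENNReal.toReal_pos (by
      simpa using (ENNReal.half_pos hd0.ne').ne') hhalf_ne_top
  have hε0 : 0 < η * r := mul_pos hη hr0
  have hcond' := (ENNReal.tendsto_nhds_zero.mp (hcond (η * r) hε0)) (d / 2)
    (ENNReal.half_pos hd0.ne')
  filter_upwards [hcond'] with i hi
  -- Fixed index `i`. Notation.
  set N := n i with hN
  set e : ℕ → Ω → ℝ := fun k ω => (P[fun ω' => ‖χ i k ω'‖|G i (k - 1)]) ω with he_def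
  set S : ℕ → Ω → ℝ := fun k ω => ∑ j ∈ Finset.Icc 1 k, e j ω with hS_def
  set A : ℕ → Set Ω := fun k => {ω | S k ω ≤ η * r} with hA_def
  -- measurability of `A k` w.r.t. `G i (k-1)`.
  have hAmeas : ∀ k, MeasurableSet[G i (k - 1)] (A k) := by
    intro k
    have hsm : StronglyMeasurable[G i (k - 1)] (S k) := by
      apply Finset.stronglyMeasurable_fun_sum
      intro j hj
      exact (stronglyMeasurable_condExp).mono
        (hGmono i (Nat.sub_le_sub_right (Finset.mem_Icc.mp hj).2 1))
    exact hsm.measurable measurableSet_Iic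
  have hAmeas0 : ∀ k, MeasurableSet (A k) := fun k => hGle i (k - 1) _ (hAmeas k)
  set χ' : ℕ → Ω → X := fun k => (A k).indicator (χ i k) with hχ'_def
  have hχ'int : ∀ k ∈ Finset.Icc 1 N, Integrable (χ' k) P :=
    fun k hk => (hint i k hk).indicator (hAmeas0 k)
  -- a.e. nonnegativity of conditional expectations
  have henn : ∀ᵐ ω ∂P, ∀ k : ℕ, 0 ≤ e k ω :=
    ae_all_iff.mpr fun k => condExp_nonneg (Filter.Eventually.of_forall fun ω => norm_nonneg _)
  have hint_sum : Integrable (fun ω => ∑ k ∈ Finset.Icc 1 N, χ' k ω) P :=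
    integrable_finset_sum _ hχ'int
  -- the key integral bound: E ‖∑ χ'‖ ≤ η * r
  have hbound : ∫ ω, ‖∑ k ∈ Finset.Icc 1 N, χ' k ω‖ ∂P ≤ η * r := by
    have h1 : ∫ ω, ‖∑ k ∈ Finset.Icc 1 N, χ' k ω‖ ∂P
        ≤ ∑ k ∈ Finset.Icc 1 N, ∫ ω, ‖χ' k ω‖ ∂P := by
      rw [← integral_finset_sum _ (fun k hk => (hχ'int k hk).norm)]
      exact integral_mono hint_sum.norm
        (integrable_finset_sum _ fun k hk => (hχ'int k hk).norm)
        (fun ω => norm_sum_le _ _)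
    have h2 : ∀ k ∈ Finset.Icc 1 N, ∫ ω, ‖χ' k ω‖ ∂P
        = ∫ ω, ((A k).indicator (e k)) ω ∂P := by
      intro k hk
      have hnormind : (fun ω => ‖χ' k ω‖) = (A k).indicator (fun ω => ‖χ i k ω‖) := by
        funext ω
        simp only [hχ'_def, Set.indicator_apply]
        split_ifs <;> simp
      rw [hnormind, integral_indicator (hAmeas0 k), integral_indicator (hAmeas0 k)]
      exact (setIntegral_condExp (hGle i (k - 1)) (hint i k hk).norm (hAmeas k)).symm
    have h3 : ∑ k ∈ Finset.Icc 1 N, ∫ ω, ((A k).indicator (e k)) ω ∂P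
        = ∫ ω, ∑ k ∈ Finset.Icc 1 N, ((A k).indicator (e k)) ω ∂P :=
      (integral_finset_sum _ fun k _ => integrable_condExp.indicator (hAmeas0 k)).symm
    have h4 : ∫ ω, ∑ k ∈ Finset.Icc 1 N, ((A k).indicator (e k)) ω ∂P ≤ η * r := by
      have hae : ∀ᵐ ω ∂P, ∑ k ∈ Finset.Icc 1 N, ((A k).indicator (e k)) ω ≤ η * r := by
        filter_upwards [henn] with ω hω
        have haux := aux_stopped_sum (η * r) hε0.le N (fun k => e k ω) (fun k => hω k)
        calc ∑ k ∈ Finset.Icc 1 N, ((A k).indicator (e k)) ω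
            = ∑ k ∈ Finset.Icc 1 N,
              (if (∑ j ∈ Finset.Icc 1 k, e j ω) ≤ η * r then e k ω else 0) := by
              refine Finset.sum_congr rfl (fun k _ => ?_)
              simp only [hA_def, hS_def, Set.indicator_apply, Set.mem_setOf_eq]
          _ ≤ η * r := haux
      calc ∫ ω, ∑ k ∈ Finset.Icc 1 N, ((A k).indicator (e k)) ω ∂P
          ≤ ∫ _, η * r ∂P := integral_mono_ae
            (integrable_finset_sum _ fun k _ => integrable_condExp.indicator (hAmeas0 k))
            (integrable_const _) hae
        _ = η * r := by simp
    calc ∫ ω, ‖∑ k ∈ Finset.Icc 1 N, χ' k ω‖ ∂P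
        ≤ ∑ k ∈ Finset.Icc 1 N, ∫ ω, ‖χ' k ω‖ ∂P := h1
      _ = ∑ k ∈ Finset.Icc 1 N, ∫ ω, ((A k).indicator (e k)) ω ∂P :=
          Finset.sum_congr rfl h2
      _ = ∫ ω, ∑ k ∈ Finset.Icc 1 N, ((A k).indicator (e k)) ω ∂P := h3
      _ ≤ η * r := h4
  -- Markov's inequality for the truncated sum
  have hMarkov : P {ω | η < ‖∑ k ∈ Finset.Icc 1 N, χ' k ω‖} ≤ d / 2 := by
    have h5 := mul_meas_ge_le_integral_of_nonneg
      (μ := P) (f := fun ω => ‖∑ k ∈ Finset.Icc 1 N, χ' k ω‖)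
      (Filter.Eventually.of_forall fun ω => norm_nonneg _) hint_sum.norm η
    have h6 : (P {ω | η ≤ ‖∑ k ∈ Finset.Icc 1 N, χ' k ω‖}).toReal ≤ r :=
      le_of_mul_le_mul_left (le_trans h5 hbound) hη
    calc P {ω | η < ‖∑ k ∈ Finset.Icc 1 N, χ' k ω‖}
        ≤ P {ω | η ≤ ‖∑ k ∈ Finset.Icc 1 N, χ' k ω‖} :=
          measure_mono (Set.setOf_subset_setOf.mpr fun ω h => le_of_lt h)
      _ = ENNReal.ofReal ((P {ω | η ≤ ‖∑ k ∈ Finset.Icc 1 N, χ' k ω‖}).toReal) :=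
          (ENNReal.ofReal_toReal (measure_ne_top _ _)).symm
      _ ≤ ENNReal.ofReal r := ENNReal.ofReal_le_ofReal h6
      _ = d / 2 := ENNReal.ofReal_toReal hhalf_ne_top
  -- the sums agree off the event {η * r < S N}
  have hset : {ω | η < ‖∑ k ∈ Finset.Icc 1 N, χ i k ω‖} ≤ᵐ[P]
      ({ω | η < ‖∑ k ∈ Finset.Icc 1 N, χ' k ω‖} ∪ {ω | η * r < S N ω} : Set Ω) := by
    filter_upwards [henn] with ω hω
    intro hmem
    by_cases hS : η * r < S N ω
    · exact Or.inr hS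
    · left
      have heq : ∀ k ∈ Finset.Icc 1 N, χ i k ω = χ' k ω := by
        intro k hk
        have hk' : ω ∈ A k := by
          simp only [hA_def, Set.mem_setOf_eq, hS_def]
          exact le_trans (Finset.sum_le_sum_of_subset_of_nonneg
            (Finset.Icc_subset_Icc_right (Finset.mem_Icc.mp hk).2)
            (fun j _ _ => hω j)) (not_lt.mp hS)
        simp only [hχ'_def, Set.indicator_of_mem hk']
      have : (∑ k ∈ Finset.Icc 1 N, χ i k ω) = ∑ k ∈ Finset.Icc 1 N, χ' k ω :=
        Finset.sum_congr rfl heq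
      show η < ‖∑ k ∈ Finset.Icc 1 N, χ' k ω‖
      rw [← this]
      exact hmem
  calc P {ω | η < ‖∑ k ∈ Finset.Icc 1 N, χ i k ω‖}
      ≤ P ({ω | η < ‖∑ k ∈ Finset.Icc 1 N, χ' k ω‖} ∪ {ω | η * r < S N ω}) :=
        measure_mono_ae hset
    _ ≤ P {ω | η < ‖∑ k ∈ Finset.Icc 1 N, χ' k ω‖} + P {ω | η * r < S N ω} :=
        measure_union_le _ _
    _ ≤ d / 2 + d / 2 := add_le_add hMarkov hi
    _ = d := ENNReal.add_halves d
    _ ≤ δ := min_le_left _ _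
end

section
/- Let (Ω, ℱ, P) be a probability space and 𝒳 a real Banach space. For each index ι in some index set, suppose given n(ι) ∈ ℕ, a filtration 𝒢^ι_0 ⊆ … ⊆ 𝒢^ι_{n(ι)} ⊆ ℱ, and Bochner-integrable 𝒳-valued random variables χ^ι_1, …, χ^ι_{n(ι)} with χ^ι_i measurable with respect to 𝒢^ι_i. If lim_{M→∞} sup_ι P( ∑_{i=1}^{n(ι)} E[ ‖χ^ι_i‖ | 𝒢^ι_{i−1} ] > M ) = 0, then lim_{M→∞} sup_ι P( ‖ ∑_{i=1}^{n(ι)} χ^ι_i ‖ > M ) = 0. -/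
open MeasureTheory

lemma key_lemma {Ω X : Type*} [NormedAddCommGroup X] [NormedSpace ℝ X]
    {m0 : MeasurableSpace Ω} (P : Measure Ω) [IsProbabilityMeasure P]
    (n : ℕ) (G : ℕ → MeasurableSpace Ω)
    (hGmono : Monotone G) (hGle : ∀ k, G k ≤ m0) (χ : ℕ → Ω → X)
    (hint : ∀ k ∈ Finset.Icc 1 n, Integrable (χ k) P)
    (C M : ℝ) (hC : 0 < C) (hM : 0 < M) :
    P {ω | M < ‖∑ k ∈ Finset.Icc 1 n, χ k ω‖} ≤
      P {ω | C < ∑ k ∈ Finset.Icc 1 n, (P[fun ω' => ‖χ k ω'‖|G (k-1)]) ω}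
      + ENNReal.ofReal (C / M) := by
  set f : ℕ → Ω → ℝ := fun k => P[fun ω' => ‖χ k ω'‖|G (k-1)] with hf
  set A : ℕ → Set Ω := fun k => {ω | ∑ l ∈ Finset.Icc 1 k, f l ω ≤ C} with hA
  have hA_meas : ∀ k, MeasurableSet[G (k-1)] (A k) := by
    intro k
    have hsm : StronglyMeasurable[G (k-1)] (fun ω => ∑ l ∈ Finset.Icc 1 k, f l ω) := by
      apply Finset.stronglyMeasurable_fun_sum
      intro l hl
      have hl' := Finset.mem_Icc.mp hl
      exact (stronglyMeasurable_condExp).mono (hGmono (by omega : l - 1 ≤ k - 1))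
    exact hsm.measurable measurableSet_Iic
  have hA_meas0 : ∀ k, MeasurableSet (A k) := fun k => hGle (k-1) _ (hA_meas k)
  have hf_nonneg : ∀ k, 0 ≤ᵐ[P] f k := fun k =>
    condExp_nonneg (ae_of_all _ fun ω => norm_nonneg _)
  set S : Ω → X := fun ω => ∑ k ∈ Finset.Icc 1 n, (A k).indicator (χ k) ω with hS
  have hS_int : Integrable S P :=
    integrable_finset_sum _ fun k hk => (hint k hk).indicator (hA_meas0 k)
  -- a.e. nonneg set
  have hae : ∀ᵐ ω ∂P, ∀ l ∈ Finset.Icc 1 n, 0 ≤ f l ω := by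
    refine (MeasureTheory.ae_ball_iff (Finset.Icc 1 n).countable_toSet).mpr fun l _ => hf_nonneg l
  -- integral bound
  have hintS : ∫ ω, ‖S ω‖ ∂P ≤ C := by
    have h1 : ∫ ω, ‖S ω‖ ∂P ≤ ∫ ω, ∑ k ∈ Finset.Icc 1 n, (A k).indicator (f k) ω ∂P := by
      have hrhs_int : Integrable (fun ω => ∑ k ∈ Finset.Icc 1 n, (A k).indicator (f k) ω) P :=
        integrable_finset_sum _ fun k hk => (integrable_condExp).indicator (hA_meas0 k)
      calc ∫ ω, ‖S ω‖ ∂P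
          ≤ ∫ ω, ∑ k ∈ Finset.Icc 1 n, (A k).indicator (fun ω' => ‖χ k ω'‖) ω ∂P := by
            apply integral_mono hS_int.norm
            · exact integrable_finset_sum _ fun k hk =>
                ((hint k hk).norm).indicator (hA_meas0 k)
            · intro ω
              refine (norm_sum_le _ _).trans (le_of_eq ?_)
              exact Finset.sum_congr rfl fun k _ => norm_indicator_eq_indicator_norm _ _
        _ = ∑ k ∈ Finset.Icc 1 n, ∫ ω in A k, ‖χ k ω‖ ∂P := by
            rw [integral_finset_sum]
            · exact Finset.sum_congr rfl fun k _ => integral_indicator (hA_meas0 k)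
            · exact fun k hk => ((hint k hk).norm).indicator (hA_meas0 k)
        _ = ∑ k ∈ Finset.Icc 1 n, ∫ ω in A k, f k ω ∂P := by
            refine Finset.sum_congr rfl fun k hk => ?_
            exact (setIntegral_condExp (hGle (k-1)) ((hint k hk).norm) (hA_meas k)).symm
        _ = ∫ ω, ∑ k ∈ Finset.Icc 1 n, (A k).indicator (f k) ω ∂P := by
            rw [integral_finset_sum]
            · exact Finset.sum_congr rfl fun k _ => (integral_indicator (hA_meas0 k)).symm
            · exact fun k hk => (integrable_condExp).indicator (hA_meas0 k)
    refine h1.trans ?_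
    have h2 : ∀ᵐ ω ∂P, ∑ k ∈ Finset.Icc 1 n, (A k).indicator (f k) ω ≤ C := by
      filter_upwards [hae] with ω hω
      have key : ∀ m, m ≤ n → ∑ k ∈ Finset.Icc 1 m, (A k).indicator (f k) ω ≤ C := by
        intro m
        induction m with
        | zero => intro _; simp [hC.le]
        | succ m ih =>
          intro hmn
          rw [Finset.sum_Icc_succ_top (by omega : 1 ≤ m + 1)]
          by_cases hmem : ω ∈ A (m+1)
          · calc (∑ k ∈ Finset.Icc 1 m, (A k).indicator (f k) ω) + (A (m+1)).indicator (f (m+1)) ω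
                ≤ (∑ k ∈ Finset.Icc 1 m, f k ω) + f (m+1) ω := by
                  gcongr with k hk
                  · by_cases h : ω ∈ A k
                    · simp [Set.indicator_of_mem h]
                    · simp only [Set.indicator_of_notMem h]
                      have hk' := Finset.mem_Icc.mp hk
                      exact hω k (Finset.mem_Icc.mpr ⟨hk'.1, by omega⟩)
                  · simp [Set.indicator_of_mem hmem]
              _ = ∑ k ∈ Finset.Icc 1 (m+1), f k ω := (Finset.sum_Icc_succ_top (by omega) _).symm
              _ ≤ C := hmem
          · rw [Set.indicator_of_notMem hmem, add_zero]
            exact ih (by omega)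
      exact key n le_rfl
    calc ∫ ω, ∑ k ∈ Finset.Icc 1 n, (A k).indicator (f k) ω ∂P
        ≤ ∫ _ω, C ∂P := integral_mono_ae
          (integrable_finset_sum _ fun k hk => (integrable_condExp).indicator (hA_meas0 k))
          (integrable_const C) h2
      _ = C := by simp
  -- Markov
  have hmarkov : P {ω | M < ‖S ω‖} ≤ ENNReal.ofReal (C / M) := by
    have h := mul_meas_ge_le_integral_of_nonneg (ae_of_all P fun ω => norm_nonneg (S ω))
      hS_int.norm M
    have h2 : (P {ω | M ≤ ‖S ω‖}).toReal ≤ C / M := by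
      rw [le_div_iff₀ hM, mul_comm]
      exact h.trans hintS
    have h3 : P {ω | M < ‖S ω‖} ≤ P {ω | M ≤ ‖S ω‖} :=
      measure_mono (Set.setOf_subset_setOf.mpr fun ω hω => hω.le)
    refine h3.trans ?_
    rw [ENNReal.le_ofReal_iff_toReal_le (measure_ne_top P _) (by positivity)]
    exact h2
  -- event inclusion
  have hincl : P {ω | M < ‖∑ k ∈ Finset.Icc 1 n, χ k ω‖} ≤
      P ({ω | C < ∑ k ∈ Finset.Icc 1 n, f k ω} ∪ {ω | M < ‖S ω‖}) := by
    apply measure_mono_ae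
    filter_upwards [hae] with ω hω hmem
    by_cases hc : C < ∑ k ∈ Finset.Icc 1 n, f k ω
    · exact Or.inl hc
    · right
      push_neg at hc
      have hSeq : S ω = ∑ k ∈ Finset.Icc 1 n, χ k ω := by
        refine Finset.sum_congr rfl fun k hk => ?_
        have hAk : ω ∈ A k := by
          refine le_trans ?_ hc
          apply Finset.sum_le_sum_of_subset_of_nonneg
          · apply Finset.Icc_subset_Icc_right (Finset.mem_Icc.mp hk).2
          · intro l hl hl'
            exact hω l hl
        exact Set.indicator_of_mem hAk _
      show M < ‖S ω‖
      rw [hSeq]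
      exact hmem
  exact hincl.trans ((measure_union_le _ _).trans (add_le_add le_rfl hmarkov))

/-- Lemma A.3 (ii): transfer of uniform tightness from the conditional sums
to the Banach-space-valued sums. -/
theorem stmt_5 {Ω X ι : Type*} [NormedAddCommGroup X] [NormedSpace ℝ X]
    {m0 : MeasurableSpace Ω} (P : Measure Ω) [IsProbabilityMeasure P]
    (n : ι → ℕ) (G : ι → ℕ → MeasurableSpace Ω)
    (hGmono : ∀ i, Monotone (G i)) (hGle : ∀ i k, G i k ≤ m0)
    (χ : ι → ℕ → Ω → X)
    (hint : ∀ i, ∀ k ∈ Finset.Icc 1 (n i), Integrable (χ i k) P)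
    (hmeas : ∀ i, ∀ k ∈ Finset.Icc 1 (n i), StronglyMeasurable[G i k] (χ i k))
    (hcond : Filter.Tendsto
      (fun M : ℝ => ⨆ i, P {ω | M <
        ∑ k ∈ Finset.Icc 1 (n i), (P[fun ω' => ‖χ i k ω'‖|G i (k - 1)]) ω})
      Filter.atTop (nhds 0)) :
    Filter.Tendsto
      (fun M : ℝ => ⨆ i, P {ω | M < ‖∑ k ∈ Finset.Icc 1 (n i), χ i k ω‖})
      Filter.atTop (nhds 0) := by
  rw [ENNReal.tendsto_nhds_zero]
  intro ε hε
  have hhalf : (0 : ENNReal) < ε / 2 := ENNReal.half_pos hε.ne'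
  -- choose C
  have h1 := (ENNReal.tendsto_nhds_zero.mp hcond) (ε / 2) hhalf
  obtain ⟨C, hC1, hC2⟩ : ∃ C : ℝ, 1 ≤ C ∧
      (⨆ i, P {ω | C < ∑ k ∈ Finset.Icc 1 (n i),
        (P[fun ω' => ‖χ i k ω'‖|G i (k - 1)]) ω}) ≤ ε / 2 := by
    rcases (h1.and (Filter.eventually_ge_atTop (1 : ℝ))).exists with ⟨C, hC2, hC1⟩
    exact ⟨C, hC1, hC2⟩
  have hCpos : 0 < C := lt_of_lt_of_le one_pos hC1
  -- for large M
  have h2 : Filter.Tendsto (fun M : ℝ => ENNReal.ofReal (C / M)) Filter.atTop (nhds 0) := by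
    have : Filter.Tendsto (fun M : ℝ => C / M) Filter.atTop (nhds 0) :=
      Filter.Tendsto.div_atTop tendsto_const_nhds Filter.tendsto_id
    simpa [ENNReal.ofReal_zero] using (ENNReal.tendsto_ofReal this)
  have h3 := (ENNReal.tendsto_nhds_zero.mp h2) (ε / 2) hhalf
  filter_upwards [h3, Filter.eventually_gt_atTop (0 : ℝ)] with M hM3 hMpos
  refine iSup_le fun i => ?_
  calc P {ω | M < ‖∑ k ∈ Finset.Icc 1 (n i), χ i k ω‖}
      ≤ P {ω | C < ∑ k ∈ Finset.Icc 1 (n i),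
          (P[fun ω' => ‖χ i k ω'‖|G i (k - 1)]) ω} + ENNReal.ofReal (C / M) :=
        key_lemma P (n i) (G i) (hGmono i) (hGle i) (χ i) (hint i) C M hCpos hMpos
    _ ≤ (⨆ i, P {ω | C < ∑ k ∈ Finset.Icc 1 (n i),
          (P[fun ω' => ‖χ i k ω'‖|G i (k - 1)]) ω}) + ENNReal.ofReal (C / M) := by
        gcongr
        exact le_iSup (fun i => P {ω | C < ∑ k ∈ Finset.Icc 1 (n i),
          (P[fun ω' => ‖χ i k ω'‖|G i (k - 1)]) ω}) i
    _ ≤ ε / 2 + ε / 2 := add_le_add hC2 hM3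
    _ = ε := ENNReal.add_halves ε
end

section
/- Let (Ω, ℱ, P) be a probability space and 𝒳 a real Banach space. Along a filter l on an index type, suppose for each index ι one is given n(ι) ∈ ℕ, a filtration 𝒢^ι_0 ⊆ … ⊆ 𝒢^ι_{n(ι)} ⊆ ℱ, Bochner-integrable 𝒳-valued random variables χ^ι_1, …, χ^ι_{n(ι)} with χ^ι_i measurable with respect to 𝒢^ι_i, and a positive real r(ι). Then: (a) if for every η > 0, P( ∑_{i=1}^{n(ι)} E[‖χ^ι_i‖ | 𝒢^ι_{i−1}] > η · r(ι) ) → 0 along l, then for every η > 0, P( ‖∑_{i=1}^{n(ι)} χ^ι_i‖ > η · r(ι) ) → 0 along l; (b) if lim_{M→∞} sup_ι P( ∑_{i=1}^{n(ι)} E[‖χ^ι_i‖ | 𝒢^ι_{i−1}] > M · r(ι) ) = 0, then lim_{M→∞} sup_ι P( ‖∑_{i=1}^{n(ι)} χ^ι_i‖ > M · r(ι) ) = 0. -/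
open MeasureTheory
section Aux
open Finset


lemma sum_ite_le {n : ℕ} (inc : ℕ → ℝ) (h0 : ∀ j ∈ Finset.Icc 1 n, 0 ≤ inc j)
    {d : ℝ} (hd : 0 ≤ d) :
    ∑ k ∈ Finset.Icc 1 n, (if ∑ j ∈ Finset.Icc 1 k, inc j ≤ d then inc k else 0) ≤ d := by
  classical
  rw [← Finset.sum_filter]
  set S := (Finset.Icc 1 n).filter (fun k => ∑ j ∈ Finset.Icc 1 k, inc j ≤ d) with hS
  rcases S.eq_empty_or_nonempty with h | h
  · simp [h, hd]
  · set m := S.max' h with hm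
    have hmS : m ∈ S := S.max'_mem h
    have hmIcc : m ∈ Finset.Icc 1 n := Finset.mem_filter.1 hmS |>.1
    have hmd : ∑ j ∈ Finset.Icc 1 m, inc j ≤ d := (Finset.mem_filter.1 hmS).2
    have hsub : S ⊆ Finset.Icc 1 m := by
      intro k hk
      have hk1 := Finset.mem_filter.1 hk |>.1
      exact Finset.mem_Icc.2 ⟨(Finset.mem_Icc.1 hk1).1, S.le_max' k hk⟩
    calc ∑ k ∈ S, inc k ≤ ∑ j ∈ Finset.Icc 1 m, inc j := by
          apply Finset.sum_le_sum_of_subset_of_nonneg hsub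
          intro j hj _
          exact h0 j (Finset.mem_Icc.2 ⟨(Finset.mem_Icc.1 hj).1,
            le_trans (Finset.mem_Icc.1 hj).2 (Finset.mem_Icc.1 hmIcc).2⟩)
      _ ≤ d := hmd

lemma key_lenglart {Ω X : Type*} [NormedAddCommGroup X] {m0 : MeasurableSpace Ω}
    (P : Measure Ω) [IsProbabilityMeasure P] (n : ℕ) (G : ℕ → MeasurableSpace Ω)
    (hGmono : Monotone G) (hGle : ∀ k, G k ≤ m0) (χ : ℕ → Ω → X)
    (hint : ∀ k ∈ Finset.Icc 1 n, Integrable (χ k) P)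
    {c d : ℝ} (hc : 0 < c) (hd : 0 < d) :
    P {ω | c < ‖∑ k ∈ Finset.Icc 1 n, χ k ω‖} ≤
      P {ω | d < ∑ k ∈ Finset.Icc 1 n, (P[fun ω' => ‖χ k ω'‖|G (k-1)]) ω}
      + ENNReal.ofReal (d / c) := by
  classical
  set inc : ℕ → Ω → ℝ := fun k => P[fun ω' => ‖χ k ω'‖|G (k-1)] with hinc
  set A : ℕ → Ω → ℝ := fun m ω => ∑ j ∈ Finset.Icc 1 m, inc j ω with hA
  set E : ℕ → Set Ω := fun k => {ω | A k ω ≤ d} with hE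
  -- measurability of E k
  have hAmeas : ∀ k, StronglyMeasurable[G (k-1)] (A k) := by
    intro k
    apply Finset.stronglyMeasurable_fun_sum
    intro j hj
    exact (stronglyMeasurable_condExp).mono
      (hGmono (Nat.sub_le_sub_right (Finset.mem_Icc.1 hj).2 1))
  have hEmeas : ∀ k, MeasurableSet[G (k-1)] (E k) := by
    intro k
    exact measurableSet_le (hAmeas k).measurable measurable_const
  have hEmeas0 : ∀ k, MeasurableSet (E k) := fun k => hGle (k-1) _ (hEmeas k)
  -- T
  set T : Ω → ℝ := fun ω => ∑ k ∈ Finset.Icc 1 n, (E k).indicator (fun ω => ‖χ k ω‖) ω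
    with hT
  have hT_int : Integrable T P := by
    apply integrable_finset_sum
    intro k hk
    exact ((hint k hk).norm).indicator (hEmeas0 k)
  have hT_nonneg : ∀ ω, 0 ≤ T ω := by
    intro ω
    exact Finset.sum_nonneg fun k _ => Set.indicator_nonneg (fun ω _ => norm_nonneg _) ω
  -- a.e. nonneg increments
  have h0 : ∀ᵐ ω ∂P, ∀ j, j ∈ Finset.Icc 1 n → 0 ≤ inc j ω := by
    rw [MeasureTheory.ae_all_iff]
    intro j
    by_cases hj : j ∈ Finset.Icc 1 n
    · exact (condExp_nonneg (Filter.Eventually.of_forall fun ω => norm_nonneg _)).mono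
        (fun ω h _ => h)
    · exact Filter.Eventually.of_forall fun ω h => absurd h hj
  -- integral of T ≤ d
  have hB_int : Integrable (fun ω => ∑ k ∈ Finset.Icc 1 n, (E k).indicator (inc k) ω) P :=
    integrable_finset_sum _ fun k hk => integrable_condExp.indicator (hEmeas0 k)
  have hint_T : ∫ ω, T ω ∂P ≤ d := by
    have h1 : ∫ ω, T ω ∂P = ∑ k ∈ Finset.Icc 1 n,
        ∫ ω in E k, ‖χ k ω‖ ∂P := by
      rw [integral_finset_sum _ (fun k hk => ((hint k hk).norm).indicator (hEmeas0 k))]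
      exact Finset.sum_congr rfl fun k hk => integral_indicator (hEmeas0 k)
    have h2 : ∀ k ∈ Finset.Icc 1 n, ∫ ω in E k, ‖χ k ω‖ ∂P = ∫ ω in E k, inc k ω ∂P :=
      fun k hk => (setIntegral_condExp (hGle (k-1)) ((hint k hk).norm) (hEmeas k)).symm
    rw [h1, Finset.sum_congr rfl h2]
    have h3 : ∑ k ∈ Finset.Icc 1 n, ∫ ω in E k, inc k ω ∂P =
        ∫ ω, ∑ k ∈ Finset.Icc 1 n, (E k).indicator (inc k) ω ∂P := by
      rw [integral_finset_sum _ (fun k hk => integrable_condExp.indicator (hEmeas0 k))]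
      exact Finset.sum_congr rfl fun k hk => (integral_indicator (hEmeas0 k)).symm
    rw [h3]
    calc ∫ ω, ∑ k ∈ Finset.Icc 1 n, (E k).indicator (inc k) ω ∂P
        ≤ ∫ _, d ∂P := by
          apply integral_mono_ae hB_int (integrable_const d)
          filter_upwards [h0] with ω hω
          exact sum_ite_le (fun j => inc j ω) hω hd.le
      _ = d := by simp
  -- Markov
  have hMarkov : P {ω | c < T ω} ≤ ENNReal.ofReal (d / c) := by
    have h1 : P {ω | c < T ω} ≤ P {ω | ENNReal.ofReal c ≤ ENNReal.ofReal (T ω)} := by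
      apply measure_mono
      intro ω hω
      exact ENNReal.ofReal_le_ofReal (le_of_lt hω)
    have h2 := mul_meas_ge_le_lintegral₀
      (f := fun ω => ENNReal.ofReal (T ω))
      (hT_int.aemeasurable.ennreal_ofReal) (ENNReal.ofReal c)
    have h3 : ∫⁻ ω, ENNReal.ofReal (T ω) ∂P = ENNReal.ofReal (∫ ω, T ω ∂P) :=
      (ofReal_integral_eq_lintegral_ofReal hT_int
        (Filter.Eventually.of_forall hT_nonneg)).symm
    have hc0 : ENNReal.ofReal c ≠ 0 := by
      simp [ENNReal.ofReal_eq_zero, not_le, hc]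
    have h4 : P {ω | ENNReal.ofReal c ≤ ENNReal.ofReal (T ω)} ≤
        ENNReal.ofReal (∫ ω, T ω ∂P) / ENNReal.ofReal c := by
      rw [ENNReal.le_div_iff_mul_le (Or.inl hc0) (Or.inl ENNReal.ofReal_ne_top)]
      rw [mul_comm]
      rw [← h3]
      exact h2
    calc P {ω | c < T ω} ≤ ENNReal.ofReal (∫ ω, T ω ∂P) / ENNReal.ofReal c :=
          le_trans h1 h4
      _ ≤ ENNReal.ofReal d / ENNReal.ofReal c := by
          gcongr
      _ = ENNReal.ofReal (d / c) := (ENNReal.ofReal_div_of_pos hc).symm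
  -- inclusion
  have hincl : P {ω | c < ‖∑ k ∈ Finset.Icc 1 n, χ k ω‖} ≤
      P ({ω | d < A n ω} ∪ {ω | c < T ω}) := by
    apply measure_mono_ae
    filter_upwards [h0] with ω hω hmem
    by_cases hAn : d < A n ω
    · exact Or.inl hAn
    · right
      push_neg at hAn
      have hall : ∀ k ∈ Finset.Icc 1 n, ω ∈ E k := by
        intro k hk
        have hksub : Finset.Icc 1 k ⊆ Finset.Icc 1 n := by
          apply Finset.Icc_subset_Icc le_rfl (Finset.mem_Icc.1 hk).2
        have : A k ω ≤ A n ω := by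
          apply Finset.sum_le_sum_of_subset_of_nonneg hksub
          intro j hj _
          exact hω j hj
        exact le_trans this hAn
      have : T ω = ∑ k ∈ Finset.Icc 1 n, ‖χ k ω‖ :=
        Finset.sum_congr rfl fun k hk => Set.indicator_of_mem (hall k hk) _
      rw [Set.mem_setOf_eq, this]
      exact lt_of_lt_of_le hmem (norm_sum_le _ _)
  calc P {ω | c < ‖∑ k ∈ Finset.Icc 1 n, χ k ω‖}
      ≤ P ({ω | d < A n ω} ∪ {ω | c < T ω}) := hincl
    _ ≤ P {ω | d < A n ω} + P {ω | c < T ω} := measure_union_le _ _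
    _ ≤ P {ω | d < A n ω} + ENNReal.ofReal (d / c) := by gcongr

end Aux

/-- Remark after Lemma A.3: `o_p(r)` and `O_p(r)` transfer from the conditional
sums to the Banach-space-valued sums. -/
theorem stmt_6 {Ω X ι : Type*} [NormedAddCommGroup X] [NormedSpace ℝ X]
    {m0 : MeasurableSpace Ω} (P : Measure Ω) [IsProbabilityMeasure P]
    (l : Filter ι) (n : ι → ℕ) (G : ι → ℕ → MeasurableSpace Ω)
    (hGmono : ∀ i, Monotone (G i)) (hGle : ∀ i k, G i k ≤ m0)
    (χ : ι → ℕ → Ω → X)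
    (hint : ∀ i, ∀ k ∈ Finset.Icc 1 (n i), Integrable (χ i k) P)
    (hmeas : ∀ i, ∀ k ∈ Finset.Icc 1 (n i), StronglyMeasurable[G i k] (χ i k))
    (r : ι → ℝ) (hr : ∀ i, 0 < r i) :
    ((∀ η : ℝ, 0 < η → Filter.Tendsto
        (fun i => P {ω | η * r i <
          ∑ k ∈ Finset.Icc 1 (n i), (P[fun ω' => ‖χ i k ω'‖|G i (k - 1)]) ω})
        l (nhds 0)) →
      ∀ η : ℝ, 0 < η → Filter.Tendsto
        (fun i => P {ω | η * r i < ‖∑ k ∈ Finset.Icc 1 (n i), χ i k ω‖}) l (nhds 0)) ∧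
    (Filter.Tendsto
        (fun M : ℝ => ⨆ i, P {ω | M * r i <
          ∑ k ∈ Finset.Icc 1 (n i), (P[fun ω' => ‖χ i k ω'‖|G i (k - 1)]) ω})
        Filter.atTop (nhds 0) →
      Filter.Tendsto
        (fun M : ℝ => ⨆ i, P {ω | M * r i < ‖∑ k ∈ Finset.Icc 1 (n i), χ i k ω‖})
        Filter.atTop (nhds 0)) := by
  constructor
  · intro h η hη
    rw [ENNReal.tendsto_nhds_zero]
    intro ε hε
    set ε₀ : ENNReal := min ε 1 with hε₀def
    have hε₀pos : 0 < ε₀ := lt_min hε zero_lt_one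
    have hε₀top : ε₀ ≠ ⊤ := ne_top_of_le_ne_top ENNReal.one_ne_top (min_le_right _ _)
    have hε₀le : ε₀ ≤ ε := min_le_left _ _
    set e : ℝ := (ε₀ / 2).toReal with he_def
    have he_pos : 0 < e := ENNReal.toReal_pos
      (by simp [ENNReal.div_eq_top, hε₀pos.ne', hε₀top]) (by
        exact (ENNReal.div_lt_top hε₀top (by norm_num)).ne)
    have he_eq : ENNReal.ofReal e = ε₀ / 2 :=
      ENNReal.ofReal_toReal ((ENNReal.div_lt_top hε₀top (by norm_num)).ne)
    set δ : ℝ := η * e with hδdef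
    have hδpos : 0 < δ := mul_pos hη he_pos
    have hh := (ENNReal.tendsto_nhds_zero.1 (h δ hδpos)) (ε₀ / 2)
      (ENNReal.div_pos hε₀pos.ne' (by norm_num))
    filter_upwards [hh] with i hi
    have hkey := key_lenglart P (n i) (G i) (hGmono i) (hGle i) (χ i)
      (hint i) (c := η * r i) (d := δ * r i)
      (mul_pos hη (hr i)) (mul_pos hδpos (hr i))
    have hdc : δ * r i / (η * r i) = e := by
      rw [mul_div_mul_right _ _ (hr i).ne', hδdef, mul_div_cancel_left₀ _ hη.ne']
    calc P {ω | η * r i < ‖∑ k ∈ Finset.Icc 1 (n i), χ i k ω‖}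
        ≤ P {ω | δ * r i <
            ∑ k ∈ Finset.Icc 1 (n i), (P[fun ω' => ‖χ i k ω'‖|G i (k - 1)]) ω}
          + ENNReal.ofReal (δ * r i / (η * r i)) := hkey
      _ ≤ ε₀ / 2 + ε₀ / 2 := by
          rw [hdc, he_eq]
          gcongr
      _ = ε₀ := ENNReal.add_halves _
      _ ≤ ε := hε₀le
  · intro h
    rw [ENNReal.tendsto_nhds_zero]
    intro ε hε
    set ε₀ : ENNReal := min ε 1 with hε₀def
    have hε₀pos : 0 < ε₀ := lt_min hε zero_lt_one
    have hε₀top : ε₀ ≠ ⊤ := ne_top_of_le_ne_top ENNReal.one_ne_top (min_le_right _ _)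
    have hε₀le : ε₀ ≤ ε := min_le_left _ _
    set e : ℝ := (ε₀ / 2).toReal with he_def
    have he_pos : 0 < e := ENNReal.toReal_pos
      (by simp [ENNReal.div_eq_top, hε₀pos.ne', hε₀top])
      ((ENNReal.div_lt_top hε₀top (by norm_num)).ne)
    have he_eq : ENNReal.ofReal e = ε₀ / 2 :=
      ENNReal.ofReal_toReal ((ENNReal.div_lt_top hε₀top (by norm_num)).ne)
    have hh := (ENNReal.tendsto_nhds_zero.1 h) (ε₀ / 2)
      (ENNReal.div_pos hε₀pos.ne' (by norm_num))
    obtain ⟨M₀, hM₀sup, hM₀1⟩ := (hh.and (Filter.eventually_ge_atTop (1 : ℝ))).exists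
    have hM₀pos : 0 < M₀ := lt_of_lt_of_le zero_lt_one hM₀1
    filter_upwards [Filter.eventually_ge_atTop (max 1 (M₀ / e))] with M hM
    have hM1 : (1 : ℝ) ≤ M := le_trans (le_max_left _ _) hM
    have hMpos : 0 < M := lt_of_lt_of_le zero_lt_one hM1
    have hMe : M₀ / M ≤ e := by
      rw [div_le_iff₀ hMpos]
      have : M₀ / e ≤ M := le_trans (le_max_right _ _) hM
      calc M₀ = (M₀ / e) * e := by field_simp
        _ ≤ M * e := by
            apply mul_le_mul_of_nonneg_right this he_pos.le
        _ = e * M := mul_comm _ _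
    apply iSup_le
    intro i
    have hkey := key_lenglart P (n i) (G i) (hGmono i) (hGle i) (χ i)
      (hint i) (c := M * r i) (d := M₀ * r i)
      (mul_pos hMpos (hr i)) (mul_pos hM₀pos (hr i))
    have hdc : M₀ * r i / (M * r i) = M₀ / M := mul_div_mul_right _ _ (hr i).ne'
    calc P {ω | M * r i < ‖∑ k ∈ Finset.Icc 1 (n i), χ i k ω‖}
        ≤ P {ω | M₀ * r i <
            ∑ k ∈ Finset.Icc 1 (n i), (P[fun ω' => ‖χ i k ω'‖|G i (k - 1)]) ω}
          + ENNReal.ofReal (M₀ * r i / (M * r i)) := hkey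
      _ ≤ (⨆ j, P {ω | M₀ * r j <
            ∑ k ∈ Finset.Icc 1 (n j), (P[fun ω' => ‖χ j k ω'‖|G j (k - 1)]) ω})
          + ENNReal.ofReal (M₀ / M) := by
          rw [hdc]
          gcongr
          exact le_iSup (fun j => P {ω | M₀ * r j <
            ∑ k ∈ Finset.Icc 1 (n j), (P[fun ω' => ‖χ j k ω'‖|G j (k - 1)]) ω}) i
      _ ≤ ε₀ / 2 + ε₀ / 2 := by
          gcongr
          rw [← he_eq]
          exact ENNReal.ofReal_le_ofReal hMe
      _ = ε₀ := ENNReal.add_halves _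
      _ ≤ ε := hε₀le
end

section
/- Let p ≥ 2 and let ν be a probability measure on ℝ with ∫ |z|^p dν(z) < ∞. Then there exists a constant C > 0, depending only on p and ν, such that for every μ ≥ 0 and every probability space carrying a random variable N with the Poisson distribution of mean μ and an i.i.d. sequence V_1, V_2, … of real random variables with common law ν such that N, V_1, V_2, … are jointly independent, one has E[ | ∑_{i=1}^{N} V_i |^p ] ≤ C ( μ^{p/2} + μ + μ^p ). -/
open MeasureTheory
open scoped ENNReal

lemma nat_pow_le_desc (n k : ℕ) : k ^ n ≤ 2 ^ n * k.descFactorial n + (2 * n) ^ n := by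
  rcases le_or_gt k (2 * n) with h | h
  · exact le_add_of_le_right (Nat.pow_le_pow_left h n)
  · refine le_add_of_le_left ?_
    calc k ^ n ≤ (2 * (k + 1 - n)) ^ n := Nat.pow_le_pow_left (by omega) n
    _ = 2 ^ n * (k + 1 - n) ^ n := mul_pow 2 _ n
    _ ≤ 2 ^ n * k.descFactorial n := by
        exact Nat.mul_le_mul_left _ (Nat.pow_sub_le_descFactorial k n)

lemma real_exp_tsum (x : ℝ) : ∑' k : ℕ, x ^ k / k.factorial = Real.exp x := by
  rw [Real.exp_eq_exp_ℝ, NormedSpace.exp_eq_tsum_div]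

lemma desc_fac_eq (k n : ℕ) : ((k + n).descFactorial n : ℝ) / (k + n).factorial
    = 1 / k.factorial := by
  have h : (k + n - n).factorial * (k + n).descFactorial n = (k + n).factorial :=
    Nat.factorial_mul_descFactorial (Nat.le_add_left n k)
  simp only [Nat.add_sub_cancel] at h
  rw [div_eq_div_iff (by positivity : ((k + n).factorial:ℝ) ≠ 0)
    (by positivity : (k.factorial:ℝ) ≠ 0), one_mul, ← h]
  push_cast
  ring

lemma summable_desc_div (x : ℝ) (n : ℕ) :
    Summable (fun k : ℕ => x ^ k * (k.descFactorial n : ℝ) / k.factorial) := by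
  rw [← summable_nat_add_iff n]
  have : (fun k : ℕ => x ^ (k + n) * ((k + n).descFactorial n : ℝ) / (k + n).factorial)
      = fun k : ℕ => x ^ n * (x ^ k / k.factorial) := by
    funext k
    rw [mul_div_assoc, desc_fac_eq k n, pow_add]
    ring
  rw [this]
  exact (Real.summable_pow_div_factorial x).mul_left _

lemma tsum_desc_div (x : ℝ) (n : ℕ) :
    ∑' k : ℕ, x ^ k * (k.descFactorial n : ℝ) / k.factorial = x ^ n * Real.exp x := by
  have hs := summable_desc_div x n
  have h := hs.sum_add_tsum_nat_add n
  rw [← h]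
  have h0 : ∀ i ∈ Finset.range n,
      x ^ i * (i.descFactorial n : ℝ) / i.factorial = 0 := by
    intro i hi
    rw [Nat.descFactorial_eq_zero_iff_lt.mpr (Finset.mem_range.mp hi)]
    simp
  rw [Finset.sum_congr rfl h0]
  simp only [Finset.sum_const_zero, zero_add]
  have : (fun k : ℕ => x ^ (k + n) * (((k + n).descFactorial n : ℕ) : ℝ) / (k + n).factorial)
      = fun k : ℕ => x ^ n * (x ^ k / k.factorial) := by
    funext k
    rw [mul_div_assoc, desc_fac_eq k n, pow_add]
    ring
  rw [this, tsum_mul_left, real_exp_tsum]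

lemma rpow_le_cast_pow {p : ℝ} (hp : 0 < p) {n : ℕ} (hpn : p ≤ (n:ℝ)) (k : ℕ) :
    (k : ℝ) ^ p ≤ ((k ^ n : ℕ) : ℝ) := by
  rcases Nat.eq_zero_or_pos k with rfl | hk
  · rw [Nat.cast_zero, Real.zero_rpow hp.ne']
    positivity
  · push_cast
    rw [← Real.rpow_natCast (k : ℝ) n]
    exact Real.rpow_le_rpow_of_exponent_le (by exact_mod_cast hk) hpn

lemma summable_rpow_div_factorial {p : ℝ} (hp : 0 < p) :
    Summable (fun k : ℕ => (k : ℝ) ^ p / k.factorial) := by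
  set n := ⌈p⌉₊ with hn
  have hg : Summable (fun k : ℕ => 2 ^ n * ((1:ℝ) ^ k * (k.descFactorial n : ℝ) / k.factorial)
      + (2 * (n : ℝ)) ^ n * ((1:ℝ) ^ k / k.factorial)) :=
    ((summable_desc_div 1 n).mul_left _).add
      ((Real.summable_pow_div_factorial 1).mul_left _)
  refine hg.of_nonneg_of_le (fun k => by positivity) (fun k => ?_)
  have h1 := rpow_le_cast_pow hp (Nat.le_ceil p) k
  have h2 : ((k ^ n : ℕ) : ℝ) ≤ 2 ^ n * (k.descFactorial n : ℝ) + (2 * (n:ℝ)) ^ n := by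
    have h3 := nat_pow_le_desc n k
    have h4 : ((k ^ n : ℕ) : ℝ) ≤ ((2 ^ n * k.descFactorial n + (2 * n) ^ n : ℕ) : ℝ) :=
      Nat.cast_le.mpr h3
    push_cast at h4 ⊢
    linarith
  calc (k : ℝ) ^ p / k.factorial ≤ (2 ^ n * (k.descFactorial n : ℝ) + (2 * (n:ℝ)) ^ n)
        / k.factorial := by gcongr; exact h1.trans h2
    _ = _ := by simp only [one_pow]; ring

lemma pois_desc_tsum (μ : ℝ) (hμ : 0 ≤ μ) (n : ℕ) :
    ∑' k : ℕ, ENNReal.ofReal (Real.exp (-μ) * (μ ^ k * (k.descFactorial n : ℝ) / k.factorial))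
      = ENNReal.ofReal (μ ^ n) := by
  rw [← ENNReal.ofReal_tsum_of_nonneg (fun k => mul_nonneg (Real.exp_nonneg _)
    (div_nonneg (mul_nonneg (pow_nonneg hμ k) (Nat.cast_nonneg _)) (Nat.cast_nonneg _)))
    ((summable_desc_div μ n).mul_left _)]
  congr 1
  rw [tsum_mul_left, tsum_desc_div, Real.exp_neg]
  field_simp

lemma pois_tsum_one (μ : ℝ) (hμ : 0 ≤ μ) :
    ∑' k : ℕ, ENNReal.ofReal (Real.exp (-μ) * μ ^ k / k.factorial) = 1 := by
  have h := pois_desc_tsum μ hμ 0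
  simp only [Nat.descFactorial_zero, Nat.cast_one, mul_one, pow_zero,
    ENNReal.ofReal_one] at h
  rw [← h]
  apply tsum_congr; intro k
  congr 1
  ring

lemma pois_moment (p : ℝ) (hp : 2 ≤ p) (μ : ℝ) (hμ : 0 ≤ μ) :
    ∑' k : ℕ, ENNReal.ofReal (Real.exp (-μ) * μ ^ k / k.factorial)
        * ENNReal.ofReal ((k : ℝ) ^ p)
      ≤ ENNReal.ofReal (((∑' k : ℕ, (k : ℝ) ^ p / k.factorial) + 1 + 2 ^ ⌈p⌉₊
            + (2 * (⌈p⌉₊ : ℝ)) ^ ⌈p⌉₊) * (μ ^ (p / 2) + μ + μ ^ p)) := by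
  set n := ⌈p⌉₊ with hn
  set A := ∑' k : ℕ, (k : ℝ) ^ p / k.factorial with hA
  set K : ℝ := A + 1 + 2 ^ n + (2 * (n : ℝ)) ^ n with hK
  have hp0 : 0 < p := lt_of_lt_of_le two_pos hp
  have hpn : p ≤ (n : ℝ) := Nat.le_ceil p
  have hAnn : 0 ≤ A := tsum_nonneg (fun k => by positivity)
  have hsummA := summable_rpow_div_factorial hp0
  have hKnn : (0:ℝ) ≤ K := by positivity
  have hRnn : (0:ℝ) ≤ μ ^ (p / 2) + μ + μ ^ p := by positivity
  have hdesc : ∀ k : ℕ, ((k ^ n : ℕ) : ℝ)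
      ≤ 2 ^ n * (k.descFactorial n : ℝ) + (2 * (n:ℝ)) ^ n := by
    intro k
    have h4 : ((k ^ n : ℕ) : ℝ) ≤ ((2 ^ n * k.descFactorial n + (2 * n) ^ n : ℕ) : ℝ) :=
      Nat.cast_le.mpr (nat_pow_le_desc n k)
    push_cast at h4 ⊢
    linarith
  rcases le_or_gt μ 1 with hμ1 | hμ1
  · calc ∑' k : ℕ, ENNReal.ofReal (Real.exp (-μ) * μ ^ k / k.factorial)
          * ENNReal.ofReal ((k : ℝ) ^ p)
        ≤ ∑' k : ℕ, ENNReal.ofReal (μ * ((k : ℝ) ^ p / k.factorial)) := by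
          apply ENNReal.tsum_le_tsum
          intro k
          rw [← ENNReal.ofReal_mul (by positivity)]
          apply ENNReal.ofReal_le_ofReal
          rcases Nat.eq_zero_or_pos k with rfl | hk
          · simp [Real.zero_rpow hp0.ne']
          · have h1 : Real.exp (-μ) ≤ 1 := Real.exp_le_one_iff.mpr (by linarith)
            have h2 : μ ^ k ≤ μ := by
              calc μ ^ k ≤ μ ^ 1 := pow_le_pow_of_le_one hμ hμ1 hk
              _ = μ := pow_one μ
            have h3 : Real.exp (-μ) * μ ^ k ≤ μ := by
              calc Real.exp (-μ) * μ ^ k ≤ 1 * μ :=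
                mul_le_mul h1 h2 (by positivity) one_pos.le
              _ = μ := one_mul μ
            calc Real.exp (-μ) * μ ^ k / k.factorial * (k:ℝ) ^ p
                = (Real.exp (-μ) * μ ^ k) * ((k : ℝ) ^ p / k.factorial) := by ring
              _ ≤ μ * ((k : ℝ) ^ p / k.factorial) :=
                mul_le_mul_of_nonneg_right h3 (by positivity)
      _ = ENNReal.ofReal (μ * A) := by
          rw [← ENNReal.ofReal_tsum_of_nonneg (fun k => by positivity) (hsummA.mul_left μ),
            tsum_mul_left]
      _ ≤ ENNReal.ofReal (K * (μ ^ (p / 2) + μ + μ ^ p)) := by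
          apply ENNReal.ofReal_le_ofReal
          have h4 : (0:ℝ) ≤ μ ^ (p/2) := by positivity
          have h5 : (0:ℝ) ≤ μ ^ p := by positivity
          have h6 : A ≤ K := by
            have h7 : (0:ℝ) ≤ (2:ℝ) ^ n := by positivity
            have h8 : (0:ℝ) ≤ (2 * (n:ℝ)) ^ n := by positivity
            simp only [hK]
            linarith
          nlinarith
  · -- 1 ≤ μ
    have hμ0 : (0:ℝ) < μ := lt_of_lt_of_le one_pos hμ1.le
    have hμpn : μ ^ (p - (n:ℝ)) ≤ 1 :=
      Real.rpow_le_one_of_one_le_of_nonpos hμ1.le (by linarith)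
    have hμp1 : (1:ℝ) ≤ μ ^ p := Real.one_le_rpow hμ1.le hp0.le
    have hpt : ∀ k : ℕ, Real.exp (-μ) * μ ^ k / k.factorial * (k:ℝ) ^ p
        ≤ μ ^ p * (Real.exp (-μ) * μ ^ k / k.factorial)
          + (2 ^ n * μ ^ (p - (n:ℝ))
              * (Real.exp (-μ) * (μ ^ k * (k.descFactorial n : ℝ) / k.factorial))
          + (2 * (n:ℝ)) ^ n * μ ^ (p - (n:ℝ))
              * (Real.exp (-μ) * μ ^ k / k.factorial)) := by
      intro k
      have ha : (0:ℝ) ≤ Real.exp (-μ) * μ ^ k / k.factorial := by positivity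
      have hkey : (k:ℝ) ^ p ≤ μ ^ p + ((k ^ n : ℕ) : ℝ) * μ ^ (p - (n:ℝ)) := by
        rcases le_or_gt (k : ℝ) μ with h | h
        · have h1 : (k:ℝ) ^ p ≤ μ ^ p := Real.rpow_le_rpow (Nat.cast_nonneg k) h hp0.le
          have h2 : (0:ℝ) ≤ ((k ^ n : ℕ) : ℝ) * μ ^ (p - (n:ℝ)) := by positivity
          linarith
        · have hk0 : (0:ℝ) < (k:ℝ) := lt_trans hμ0 h
          have h1 : (k:ℝ) ^ p = (k:ℝ) ^ ((n:ℝ)) * (k:ℝ) ^ (p - (n:ℝ)) := by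
            rw [← Real.rpow_add hk0]; congr 1; ring
          rw [h1]
          have h2 : (k:ℝ) ^ (p - (n:ℝ)) ≤ μ ^ (p - (n:ℝ)) :=
            Real.rpow_le_rpow_of_nonpos hμ0 h.le (by linarith)
          have h3 : (k:ℝ) ^ ((n:ℝ)) = ((k ^ n : ℕ) : ℝ) := by
            rw [Real.rpow_natCast]; push_cast; ring
          rw [h3]
          have h4 : (0:ℝ) ≤ ((k ^ n : ℕ) : ℝ) := by positivity
          have h5 : (0:ℝ) ≤ μ ^ p := by positivity
          nlinarith
      have hμpn0 : (0:ℝ) ≤ μ ^ (p - (n:ℝ)) := by positivity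
      have h6 : (k:ℝ) ^ p ≤ μ ^ p
          + (2 ^ n * (k.descFactorial n : ℝ) + (2 * (n:ℝ)) ^ n) * μ ^ (p - (n:ℝ)) := by
        calc (k:ℝ) ^ p ≤ μ ^ p + ((k ^ n : ℕ) : ℝ) * μ ^ (p - (n:ℝ)) := hkey
          _ ≤ _ := by gcongr; exact hdesc k
      calc Real.exp (-μ) * μ ^ k / k.factorial * (k:ℝ) ^ p
          ≤ Real.exp (-μ) * μ ^ k / k.factorial
            * (μ ^ p + (2 ^ n * (k.descFactorial n : ℝ) + (2 * (n:ℝ)) ^ n)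
                * μ ^ (p - (n:ℝ))) := by gcongr
        _ = _ := by ring
    calc ∑' k : ℕ, ENNReal.ofReal (Real.exp (-μ) * μ ^ k / k.factorial)
          * ENNReal.ofReal ((k : ℝ) ^ p)
        ≤ ∑' k : ℕ, (ENNReal.ofReal (μ ^ p)
              * ENNReal.ofReal (Real.exp (-μ) * μ ^ k / k.factorial)
            + (ENNReal.ofReal (2 ^ n * μ ^ (p - (n:ℝ)))
              * ENNReal.ofReal (Real.exp (-μ) * (μ ^ k * (k.descFactorial n : ℝ) / k.factorial))
            + ENNReal.ofReal ((2 * (n:ℝ)) ^ n * μ ^ (p - (n:ℝ)))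
              * ENNReal.ofReal (Real.exp (-μ) * μ ^ k / k.factorial))) := by
          apply ENNReal.tsum_le_tsum
          intro k
          rw [← ENNReal.ofReal_mul (by positivity), ← ENNReal.ofReal_mul (by positivity),
            ← ENNReal.ofReal_mul (by positivity), ← ENNReal.ofReal_mul (by positivity),
            ← ENNReal.ofReal_add (by positivity) (by positivity),
            ← ENNReal.ofReal_add (by positivity) (by positivity)]
          exact ENNReal.ofReal_le_ofReal (hpt k)
      _ = ENNReal.ofReal (μ ^ p) * 1
          + (ENNReal.ofReal (2 ^ n * μ ^ (p - (n:ℝ))) * ENNReal.ofReal (μ ^ n)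
            + ENNReal.ofReal ((2 * (n:ℝ)) ^ n * μ ^ (p - (n:ℝ))) * 1) := by
          rw [ENNReal.tsum_add, ENNReal.tsum_add, ENNReal.tsum_mul_left,
            ENNReal.tsum_mul_left, ENNReal.tsum_mul_left, pois_tsum_one μ hμ,
            pois_desc_tsum μ hμ]
      _ ≤ ENNReal.ofReal (K * (μ ^ (p / 2) + μ + μ ^ p)) := by
          rw [mul_one, mul_one, ← ENNReal.ofReal_mul (by positivity),
            ← ENNReal.ofReal_add (by positivity) (by positivity),
            ← ENNReal.ofReal_add (by positivity) (by positivity)]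
          apply ENNReal.ofReal_le_ofReal
          have hμnp : (0:ℝ) ≤ μ ^ (p/2) := by positivity
          have hmul : 2 ^ n * μ ^ (p - (n:ℝ)) * μ ^ n = 2 ^ n * μ ^ p := by
            rw [← Real.rpow_natCast μ n, mul_assoc, ← Real.rpow_add hμ0, sub_add_cancel]
          have h7 : (2 * (n:ℝ)) ^ n * μ ^ (p - (n:ℝ)) ≤ (2 * (n:ℝ)) ^ n * μ ^ p := by
            have h8 : (0:ℝ) ≤ (2 * (n:ℝ)) ^ n := by positivity
            nlinarith
          have h9 : (0:ℝ) ≤ (2:ℝ)^n * μ ^ p := by positivity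
          simp only [hK]
          nlinarith [mul_nonneg hAnn (Real.rpow_nonneg hμ p)]

lemma exists_good_partition {Ω : Type} [MeasurableSpace Ω] (P : Measure Ω)
    [IsProbabilityMeasure P] (N : Ω → ℕ)
    (hsum : ∑' k, P {ω | N ω = k} = 1) :
    ∃ G : ℕ → Set Ω, (∀ k, MeasurableSet (G k)) ∧ Pairwise (Function.onFun Disjoint G) ∧
      (∀ k, G k =ᵐ[P] {ω | N ω = k}) ∧ P (⋃ k, G k)ᶜ = 0 := by
  set A : ℕ → Set Ω := fun k => {ω | N ω = k} with hAdef
  set H : ℕ → Set Ω := fun k => toMeasurable P (A k) with hHdef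
  have hHmeas : ∀ k, MeasurableSet (H k) := fun k => measurableSet_toMeasurable P (A k)
  have hAH : ∀ k, A k ⊆ H k := fun k => subset_toMeasurable P (A k)
  have hPH : ∀ k, P (H k) = P (A k) := fun k => measure_toMeasurable (A k)
  have hmemA : ∀ ω, ω ∈ A (N ω) := fun ω => rfl
  have key : ∀ k i, i ≠ k → P (A i ∩ H k) = 0 := by
    intro k
    have hsplit : ∀ i, P (A i ∩ H k) + P (A i \ H k) = P (A i) :=
      fun i => measure_inter_add_diff (A i) (hHmeas k)
    have hS : (∑' i, P (A i ∩ H k)) + ∑' i, P (A i \ H k) = 1 := by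
      rw [← ENNReal.tsum_add, tsum_congr hsplit]
      exact hsum
    have h1 : P (H k) ≤ ∑' i, P (A i ∩ H k) := by
      refine le_trans (measure_mono ?_) (measure_iUnion_le _)
      intro ω hω
      exact Set.mem_iUnion.mpr ⟨N ω, hmemA ω, hω⟩
    have h2 : P (H k)ᶜ ≤ ∑' i, P (A i \ H k) := by
      refine le_trans (measure_mono ?_) (measure_iUnion_le _)
      intro ω hω
      exact Set.mem_iUnion.mpr ⟨N ω, hmemA ω, hω⟩
    have h3 : P (H k) + P (H k)ᶜ = 1 := by
      rw [measure_add_measure_compl (hHmeas k), measure_univ]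
    have h4 : ∑' i, P (A i ∩ H k) ≤ P (H k) := by
      by_contra hcon
      push_neg at hcon
      have : P (H k) + P (H k)ᶜ < (∑' i, P (A i ∩ H k)) + ∑' i, P (A i \ H k) :=
        ENNReal.add_lt_add_of_lt_of_le (by finiteness) hcon h2
      rw [h3, hS] at this
      exact lt_irrefl _ this
    have h5 : ∑' i, P (A i ∩ H k) = P (A k) := le_antisymm (h4.trans_eq (hPH k)) <| by
      calc P (A k) = P (A k ∩ H k) := by rw [Set.inter_eq_self_of_subset_left (hAH k)]
        _ ≤ ∑' i, P (A i ∩ H k) := ENNReal.le_tsum k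
    have h6 := ENNReal.tsum_eq_add_tsum_ite (f := fun i => P (A i ∩ H k)) k
    rw [h5, Set.inter_eq_self_of_subset_left (hAH k)] at h6
    nth_rewrite 1 [← add_zero (P (A k))] at h6
    have h7 := ((ENNReal.add_right_inj (measure_ne_top P (A k))).mp h6).symm
    intro i hik
    have := ENNReal.tsum_eq_zero.mp h7 i
    rwa [if_neg hik] at this
  have hHA : ∀ k, P (H k \ A k) = 0 := by
    intro k
    have hsub : H k \ A k ⊆ ⋃ i, (fun i => if i = k then ∅ else A i ∩ H k) i := by
      intro ω hω
      refine Set.mem_iUnion.mpr ⟨N ω, ?_⟩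
      have hik : N ω ≠ k := fun h => hω.2 (by rw [← h] at hω ⊢; exact hmemA ω)
      simp only [if_neg hik]
      exact ⟨hmemA ω, hω.1⟩
    refine le_antisymm (le_trans (measure_mono hsub) ?_) zero_le
    refine le_trans (measure_iUnion_le _) ?_
    have : ∀ i, P ((fun i => if i = k then ∅ else A i ∩ H k) i) = 0 := by
      intro i
      by_cases hik : i = k
      · simp [hik]
      · simp only [if_neg hik]
        exact key k i hik
    rw [tsum_congr this]
    simp
  have hHj : ∀ j k, j ≠ k → P (H j ∩ H k) = 0 := by
    intro j k hjk
    have hsub : H j ∩ H k ⊆ (H j \ A j) ∪ (A j ∩ H k) := by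
      intro ω hω
      by_cases hA : ω ∈ A j
      · exact Or.inr ⟨hA, hω.2⟩
      · exact Or.inl ⟨hω.1, hA⟩
    refine le_antisymm (le_trans (measure_mono hsub) ?_) zero_le
    refine le_trans (measure_union_le _ _) ?_
    rw [hHA j, key k j hjk, add_zero]
  set G : ℕ → Set Ω := fun k => H k \ ⋃ j ∈ Finset.range k, H j with hGdef
  have hGmeas : ∀ k, MeasurableSet (G k) :=
    fun k => (hHmeas k).diff (Finset.measurableSet_biUnion _ (fun j _ => hHmeas j))
  have hGdisj : Pairwise (Function.onFun Disjoint G) := by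
    have hmono : ∀ {j k : ℕ}, j < k → Disjoint (G j) (G k) := by
      intro j k hjk
      refine Set.disjoint_left.mpr ?_
      intro ω hωj hωk
      exact hωk.2 (Set.mem_biUnion (Finset.mem_range.mpr hjk) hωj.1)
    intro j k hjk
    rcases lt_or_gt_of_ne hjk with h | h
    · exact hmono h
    · exact (hmono h).symm
  have haeq : ∀ k, G k =ᵐ[P] A k := by
    intro k
    refine (MeasureTheory.ae_eq_set).mpr ⟨?_, ?_⟩
    · refine le_antisymm (le_trans (measure_mono ?_) (hHA k).le) zero_le
      intro ω hω
      exact ⟨hω.1.1, hω.2⟩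
    · refine le_antisymm (le_trans (measure_mono
        (?_ : A k \ G k ⊆ ⋃ j, (fun j => if j = k then ∅ else H j ∩ H k) j)) ?_) zero_le
      · intro ω hω
        have h1 : ω ∈ H k := hAH k hω.1
        have h2 : ω ∈ ⋃ j ∈ Finset.range k, H j := by
          by_contra hcon
          exact hω.2 ⟨h1, hcon⟩
        obtain ⟨j, hj, hωj⟩ := Set.mem_iUnion₂.mp h2
        refine Set.mem_iUnion.mpr ⟨j, ?_⟩
        have hjk : j ≠ k := Nat.ne_of_lt (Finset.mem_range.mp hj)
        simp only [if_neg hjk]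
        exact ⟨hωj, h1⟩
      · refine le_trans (measure_iUnion_le _) ?_
        have hz : ∀ j, P ((fun j => if j = k then ∅ else H j ∩ H k) j) = 0 := by
          intro j
          by_cases hjk : j = k
          · simp [hjk]
          · simp only [if_neg hjk]
            exact hHj j k hjk
        rw [tsum_congr hz]
        simp
  refine ⟨G, hGmeas, hGdisj, fun k => haeq k, ?_⟩
  have hPG : P (⋃ k, G k) = 1 := by
    rw [measure_iUnion hGdisj hGmeas, tsum_congr (fun k => measure_congr (haeq k))]
    exact hsum
  rw [measure_compl (MeasurableSet.iUnion hGmeas) (measure_ne_top P _), measure_univ, hPG,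
    tsub_self]

/-- The state space of the family consisting of the Poisson variable `N`
(index `none`) and the jump sizes `V i` (index `some i`). -/
def jumpSpace : Option ℕ → Type := fun o => match o with
  | none => ℕ
  | some _ => ℝ

/-- The canonical measurable structures on `jumpSpace`. -/
def jumpMS : ∀ o : Option ℕ, MeasurableSpace (jumpSpace o) := fun o => match o with
  | none => inferInstanceAs (MeasurableSpace ℕ)
  | some _ => inferInstanceAs (MeasurableSpace ℝ)

/-- The family of random variables `N, V 0, V 1, …` indexed by `Option ℕ`. -/
def jumpFun {Ω : Type*} (N : Ω → ℕ) (V : ℕ → Ω → ℝ) : ∀ o : Option ℕ, Ω → jumpSpace o :=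
  fun o => match o with
  | none => N
  | some i => V i

/-- Moment bound for a compound Poisson random sum (proof of Lemma 4.1):
`E[|∑_{i=1}^N V_i|^p] ≤ C (μ^{p/2} + μ + μ^p)` with `C` depending only on `p` and `ν`. -/
theorem stmt_8 (p : ℝ) (hp : 2 ≤ p) (ν : Measure ℝ) [IsProbabilityMeasure ν]
    (hmom : Integrable (fun z => |z| ^ p) ν) :
    ∃ C > 0, ∀ (Ω : Type) [MeasurableSpace Ω] (P : Measure Ω),
      IsProbabilityMeasure P →
      ∀ μ : ℝ, 0 ≤ μ →
      ∀ (N : Ω → ℕ) (V : ℕ → Ω → ℝ),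
      (∀ k : ℕ, P {ω | N ω = k}
        = ENNReal.ofReal (Real.exp (-μ) * μ ^ k / Nat.factorial k)) →
      (∀ i, Measure.map (V i) P = ν) →
      ProbabilityTheory.iIndepFun (m := jumpMS) (jumpFun N V) P →
      ∫ ω, |∑ i ∈ Finset.range (N ω), V i ω| ^ p ∂P
        ≤ C * (μ ^ (p / 2) + μ + μ ^ p) := by
  have hp0 : 0 < p := lt_of_lt_of_le two_pos hp
  have hp1 : 1 ≤ p := by linarith
  set A := ∑' k : ℕ, (k : ℝ) ^ p / k.factorial with hAdef
  set K : ℝ := A + 1 + 2 ^ ⌈p⌉₊ + (2 * (⌈p⌉₊ : ℝ)) ^ ⌈p⌉₊ with hKdef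
  have hAnn : 0 ≤ A := tsum_nonneg fun k => by positivity
  have hKpos : 0 < K := by positivity
  set m := ∫ z, |z| ^ p ∂ν with hmdef
  have hmnn : 0 ≤ m := integral_nonneg fun z => by positivity
  refine ⟨m * K + 1, by positivity, ?_⟩
  intro Ω mΩ P hP μ hμ N V hN hV hind
  have hRnn : 0 ≤ μ ^ (p / 2) + μ + μ ^ p := by positivity
  by_cases hf : Integrable (fun ω => |∑ i ∈ Finset.range (N ω), V i ω| ^ p) P
  swap
  · rw [integral_undef hf]
    positivity
  have hVae : ∀ i, AEMeasurable (V i) P := by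
    intro i
    by_contra hc
    have h1 := hV i
    rw [Measure.map_of_not_aemeasurable hc] at h1
    exact (IsProbabilityMeasure.ne_zero ν) h1.symm
  set V' : ℕ → Ω → ℝ := fun i => (hVae i).mk (V i) with hV'def
  have hV'meas : ∀ i, Measurable (V' i) := fun i => (hVae i).measurable_mk
  have hV'ae : ∀ i, V i =ᵐ[P] V' i := fun i => (hVae i).ae_eq_mk
  have hNV : ∀ (k : ℕ) (i : ℕ) (B : Set ℝ), MeasurableSet B →
      P ({ω | N ω = k} ∩ V i ⁻¹' B) = P {ω | N ω = k} * P (V i ⁻¹' B) := by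
    intro k i B hB
    have hpair := hind.indepFun (show (none : Option ℕ) ≠ some i by simp)
    have h2 := (ProbabilityTheory.indepFun_iff_measure_inter_preimage_eq_mul.mp hpair)
      {k} B (measurableSet_singleton k) hB
    exact h2
  have hsum1 : ∑' k, P {ω | N ω = k} = 1 := by
    rw [tsum_congr hN]
    exact pois_tsum_one μ hμ
  obtain ⟨G, hGmeas, hGdisj, hGae, hGcompl⟩ := exists_good_partition P N hsum1
  have hPG : ∀ k, P (G k) = ENNReal.ofReal (Real.exp (-μ) * μ ^ k / k.factorial) :=
    fun k => (measure_congr (hGae k)).trans (hN k)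
  set M := ∫⁻ z, ENNReal.ofReal (|z| ^ p) ∂ν with hMdef
  have hMeq : M = ENNReal.ofReal m :=
    (ofReal_integral_eq_lintegral_ofReal hmom
      (Filter.Eventually.of_forall fun z => by positivity)).symm
  have hb_meas : Measurable (fun z : ℝ => ENNReal.ofReal (|z| ^ p)) := by
    measurability
  have hVres : ∀ (k i : ℕ),
      ∫⁻ ω, ENNReal.ofReal (|V' i ω| ^ p) ∂(P.restrict (G k)) = P (G k) * M := by
    intro k i
    have hmap : Measure.map (V' i) (P.restrict (G k)) = P (G k) • ν := by
      ext B hB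
      rw [Measure.map_apply (hV'meas i) hB, Measure.restrict_apply ((hV'meas i) hB)]
      have hae1 : (V' i ⁻¹' B : Set Ω) =ᵐ[P] (V i ⁻¹' B : Set Ω) := by
        filter_upwards [hV'ae i] with ω hω
        change (V' i ω ∈ B) = (V i ω ∈ B)
        rw [hω]
      have he1 : (V' i ⁻¹' B ∩ G k : Set Ω) =ᵐ[P] ({ω | N ω = k} ∩ V i ⁻¹' B : Set Ω) := by
        refine (MeasureTheory.ae_eq_set_inter hae1 (hGae k)).trans ?_
        rw [Set.inter_comm]
        exact Filter.EventuallyEq.rfl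
      rw [measure_congr he1, hNV k i B hB, Measure.smul_apply, smul_eq_mul]
      congr 1
      · exact (measure_congr (hGae k)).symm
      · rw [← Measure.map_apply_of_aemeasurable (hVae i) hB, hV i]
    calc ∫⁻ ω, ENNReal.ofReal (|V' i ω| ^ p) ∂(P.restrict (G k))
        = ∫⁻ z, ENNReal.ofReal (|z| ^ p) ∂(Measure.map (V' i) (P.restrict (G k))) :=
          (lintegral_map hb_meas (hV'meas i)).symm
      _ = P (G k) * M := by rw [hmap, lintegral_smul_measure, smul_eq_mul]
  set h : ℕ → Ω → ℝ≥0∞ :=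
    fun k ω => ENNReal.ofReal (|∑ i ∈ Finset.range k, V' i ω| ^ p) with hhdef
  have hhmeas : ∀ k, Measurable (h k) := fun k =>
    hb_meas.comp (Finset.measurable_sum _ (fun i _ => hV'meas i))
  have hae : (fun ω => ENNReal.ofReal (|∑ i ∈ Finset.range (N ω), V i ω| ^ p))
      =ᵐ[P] (fun ω => ∑' k, Set.indicator (G k) (h k) ω) := by
    have hb1 : ∀ᵐ ω ∂P, ω ∈ ⋃ k, G k := by
      have h1 := measure_eq_zero_iff_ae_notMem.mp hGcompl
      filter_upwards [h1] with ω hω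
      simpa using hω
    have hb2 : ∀ᵐ ω ∂P, ∀ k : ℕ, (ω ∈ G k) = (ω ∈ {ω' | N ω' = k}) := by
      rw [ae_all_iff]
      exact fun k => hGae k
    have hb3 : ∀ᵐ ω ∂P, ∀ i, V i ω = V' i ω := by
      rw [ae_all_iff]
      exact hV'ae
    filter_upwards [hb1, hb2, hb3] with ω h1 h2 h3
    obtain ⟨k, hk⟩ := Set.mem_iUnion.mp h1
    have hNω : N ω = k := by
      have := (h2 k)
      rw [this] at hk
      exact hk
    have hsum' : ∑' j, Set.indicator (G j) (h j) ω = h k ω := by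
      rw [tsum_eq_single k ?_]
      · exact Set.indicator_of_mem hk _
      · intro j hjk
        refine Set.indicator_of_notMem ?_ _
        intro hj
        exact (Set.disjoint_left.mp (hGdisj hjk) hj) hk
    rw [hsum', hhdef]
    simp only
    rw [hNω, show (∑ i ∈ Finset.range k, V i ω) = ∑ i ∈ Finset.range k, V' i ω from
      Finset.sum_congr rfl fun i _ => h3 i]
  rw [integral_eq_lintegral_of_nonneg_ae
    (Filter.Eventually.of_forall fun ω => by positivity) hf.aestronglyMeasurable]
  apply ENNReal.toReal_le_of_le_ofReal (by positivity)
  have hstep : ∀ k : ℕ, ∫⁻ ω, Set.indicator (G k) (h k) ω ∂P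
      ≤ M * (P (G k) * ENNReal.ofReal ((k : ℝ) ^ p)) := by
    intro k
    rw [lintegral_indicator (hGmeas k)]
    have hkk : ENNReal.ofReal ((k : ℝ) ^ (p - 1)) * (k : ℝ≥0∞)
        = ENNReal.ofReal ((k : ℝ) ^ p) := by
      rcases Nat.eq_zero_or_pos k with rfl | hk
      · simp [Real.zero_rpow (by linarith : p - 1 ≠ 0), Real.zero_rpow hp0.ne']
      · have hkpos : (0:ℝ) < (k:ℝ) := by exact_mod_cast hk
        rw [show ((k:ℕ) : ℝ≥0∞) = ENNReal.ofReal ((k:ℕ):ℝ) by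
          rw [ENNReal.ofReal_natCast]]
        rw [← ENNReal.ofReal_mul (by positivity)]
        congr 1
        have h4 : (k:ℝ) ^ (p - 1) * (k:ℝ) ^ (1:ℝ) = (k:ℝ) ^ p := by
          rw [← Real.rpow_add hkpos]
          congr 1
          ring
        rw [Real.rpow_one] at h4
        exact h4
    calc ∫⁻ ω, h k ω ∂(P.restrict (G k))
        ≤ ∫⁻ ω, ENNReal.ofReal ((k : ℝ) ^ (p - 1))
            * ∑ i ∈ Finset.range k, ENNReal.ofReal (|V' i ω| ^ p) ∂(P.restrict (G k)) := by
          apply lintegral_mono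
          intro ω
          have hr : |∑ i ∈ Finset.range k, V' i ω| ^ p
              ≤ (k : ℝ) ^ (p - 1) * ∑ i ∈ Finset.range k, |V' i ω| ^ p := by
            calc |∑ i ∈ Finset.range k, V' i ω| ^ p
                ≤ (∑ i ∈ Finset.range k, |V' i ω|) ^ p :=
                  Real.rpow_le_rpow (abs_nonneg _) (Finset.abs_sum_le_sum_abs _ _) hp0.le
              _ ≤ ((Finset.range k).card : ℝ) ^ (p - 1)
                  * ∑ i ∈ Finset.range k, |V' i ω| ^ p :=
                  Real.rpow_sum_le_const_mul_sum_rpow _ _ hp1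
              _ = (k : ℝ) ^ (p - 1) * ∑ i ∈ Finset.range k, |V' i ω| ^ p := by
                  rw [Finset.card_range]
          calc h k ω ≤ ENNReal.ofReal ((k : ℝ) ^ (p - 1)
                * ∑ i ∈ Finset.range k, |V' i ω| ^ p) := ENNReal.ofReal_le_ofReal hr
            _ = ENNReal.ofReal ((k : ℝ) ^ (p - 1))
                * ∑ i ∈ Finset.range k, ENNReal.ofReal (|V' i ω| ^ p) := by
                rw [ENNReal.ofReal_mul (by positivity),
                  ENNReal.ofReal_sum_of_nonneg (fun i _ => by positivity)]
      _ = ENNReal.ofReal ((k : ℝ) ^ (p - 1)) * ∑ i ∈ Finset.range k, (P (G k) * M) := by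
          have hmeas' : ∀ i ∈ Finset.range k,
              Measurable fun ω => ENNReal.ofReal (|V' i ω| ^ p) :=
            fun i _ => hb_meas.comp (hV'meas i)
          rw [lintegral_const_mul' _ _ ENNReal.ofReal_ne_top,
            lintegral_finset_sum _ hmeas']
          congr 1
          exact Finset.sum_congr rfl fun i _ => hVres k i
      _ = ENNReal.ofReal ((k : ℝ) ^ (p - 1)) * ((k : ℝ≥0∞) * (P (G k) * M)) := by
          rw [Finset.sum_const, Finset.card_range, nsmul_eq_mul]
      _ = (ENNReal.ofReal ((k : ℝ) ^ (p - 1)) * (k : ℝ≥0∞)) * (P (G k) * M) := by ring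
      _ = ENNReal.ofReal ((k : ℝ) ^ p) * (P (G k) * M) := by rw [hkk]
      _ = M * (P (G k) * ENNReal.ofReal ((k : ℝ) ^ p)) := by ring
  calc ∫⁻ ω, ENNReal.ofReal (|∑ i ∈ Finset.range (N ω), V i ω| ^ p) ∂P
      = ∫⁻ ω, (∑' k, Set.indicator (G k) (h k) ω) ∂P := lintegral_congr_ae hae
    _ = ∑' k, ∫⁻ ω, Set.indicator (G k) (h k) ω ∂P :=
        lintegral_tsum fun k => ((hhmeas k).indicator (hGmeas k)).aemeasurable
    _ ≤ ∑' k, M * (P (G k) * ENNReal.ofReal ((k : ℝ) ^ p)) := ENNReal.tsum_le_tsum hstep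
    _ = M * ∑' k, (P (G k) * ENNReal.ofReal ((k : ℝ) ^ p)) := ENNReal.tsum_mul_left
    _ ≤ M * ENNReal.ofReal (K * (μ ^ (p / 2) + μ + μ ^ p)) := by
        apply mul_le_mul_right
        have h5 := pois_moment p hp μ hμ
        rw [tsum_congr (fun k => by rw [hPG k])]
        exact h5
    _ = ENNReal.ofReal m * ENNReal.ofReal (K * (μ ^ (p / 2) + μ + μ ^ p)) := by rw [hMeq]
    _ = ENNReal.ofReal (m * (K * (μ ^ (p / 2) + μ + μ ^ p))) :=
        (ENNReal.ofReal_mul hmnn).symm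
    _ ≤ ENNReal.ofReal ((m * K + 1) * (μ ^ (p / 2) + μ + μ ^ p)) := by
        apply ENNReal.ofReal_le_ofReal
        nlinarith
end
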